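/- arXiv:1511.06198 — 4 statements merged into one kernel-verified Lean document; each statement's English description precedes it below -/
import Mathlib

section
/- For every integer n ≥ 2 and every real w with 0 < w ≤ 1, the incomplete beta integral satisfies ∫_w^1 s^{-1/2}(1-s)^{(n-3)/2} ds ≥ (2((n+2)w - 1)/(n^2-1)) · w^{-3/2}(1-w)^{(n-1)/2}. -/
open MeasureTheory Real Set

theorem beta_tail_lower (n : ℕ) (hn : 2 ≤ n) (w : ℝ) (hw0 : 0 < w) (hw1 : w ≤ 1) :
    2 * (((n:ℝ) + 2) * w - 1) / ((n:ℝ)^2 - 1) * w ^ (-(3:ℝ)/2) * (1 - w) ^ (((n:ℝ) - 1)/2)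
      ≤ ∫ s in Ioc w 1, s ^ (-(1:ℝ)/2) * (1 - s) ^ (((n:ℝ) - 3)/2) := by
  have hn2 : (2:ℝ) ≤ (n:ℝ) := by exact_mod_cast hn
  have hD : (0:ℝ) < (n:ℝ)^2 - 1 := by nlinarith
  set g : ℝ → ℝ := fun s => s ^ (-(1:ℝ)/2) * (1 - s) ^ (((n:ℝ) - 3)/2) with hgdef
  set r : ℝ → ℝ := fun s =>
    3/((n:ℝ)^2-1) * (s ^ (-(5:ℝ)/2) * (1 - s) ^ (((n:ℝ)+1)/2)) with hrdef
  set F : ℝ → ℝ := fun s =>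
    2/((n:ℝ)^2-1) * ((((n:ℝ)+2)*s - 1) * s ^ (-(3:ℝ)/2) * (1 - s) ^ (((n:ℝ)-1)/2)) with hFdef
  -- integrability of g
  have hg_int : IntervalIntegrable g volume w 1 := by
    have h2 : IntervalIntegrable (fun x : ℝ => x ^ (((n:ℝ) - 3)/2)) volume (1-w) (1-1) :=
      intervalIntegral.intervalIntegrable_rpow' (by nlinarith)
    have h1 : IntervalIntegrable (fun s : ℝ => (1 - s) ^ (((n:ℝ) - 3)/2)) volume w 1 := by
      simpa using h2.comp_sub_left 1
    refine h1.continuousOn_mul ?_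
    apply ContinuousOn.rpow_const continuousOn_id
    intro x hx
    rw [uIcc_of_le hw1] at hx
    exact Or.inl (by simp; linarith [hx.1])
  -- integrability of r (continuous on [w,1])
  have hr_cont : ContinuousOn r (uIcc w 1) := by
    rw [uIcc_of_le hw1]
    apply ContinuousOn.mul continuousOn_const
    apply ContinuousOn.mul
    · apply ContinuousOn.rpow_const continuousOn_id
      intro x hx
      exact Or.inl (by simp; linarith [hx.1])
    · apply ContinuousOn.rpow_const (by fun_prop)
      intro x hx
      exact Or.inr (by positivity)
  have hr_int : IntervalIntegrable r volume w 1 := hr_cont.intervalIntegrable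
  -- continuity of F on [w,1]
  have hF_cont : ContinuousOn F (Icc w 1) := by
    apply ContinuousOn.mul continuousOn_const
    apply ContinuousOn.mul
    · apply ContinuousOn.mul (by fun_prop)
      apply ContinuousOn.rpow_const continuousOn_id
      intro x hx
      exact Or.inl (by simp; linarith [hx.1])
    · apply ContinuousOn.rpow_const (by fun_prop)
      intro x hx
      exact Or.inr (by linarith)
  -- derivative of F on (w,1)
  have hderiv : ∀ x ∈ Ioo w 1, HasDerivAt F (-(g x) + r x) x := by
    intro x hx
    have hx0 : (0:ℝ) < x := lt_of_lt_of_le hw0 hx.1.le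
    have h1x : (0:ℝ) < 1 - x := by linarith [hx.2]
    have d1 : HasDerivAt (fun s : ℝ => ((n:ℝ)+2)*s - 1) ((n:ℝ)+2) x := by
      simpa using ((hasDerivAt_id x).const_mul ((n:ℝ)+2)).sub_const 1
    have d2 : HasDerivAt (fun s : ℝ => s ^ (-(3:ℝ)/2)) ((-(3:ℝ)/2) * x ^ (-(5:ℝ)/2)) x := by
      have h := Real.hasDerivAt_rpow_const (x := x) (p := -(3:ℝ)/2) (Or.inl hx0.ne')
      convert h using 2
      norm_num
    have d3 : HasDerivAt (fun s : ℝ => (1 - s) ^ (((n:ℝ)-1)/2))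
        ((((n:ℝ)-1)/2 * (1-x) ^ (((n:ℝ)-3)/2)) * (-1)) x := by
      have h := (Real.hasDerivAt_rpow_const (x := 1 - x) (p := ((n:ℝ)-1)/2)
        (Or.inl h1x.ne')).comp x (((hasDerivAt_id x).const_sub 1))
      convert h using 2
      · rfl
      · rfl
      · rfl
      · rw [show ((n:ℝ)-1)/2 - 1 = ((n:ℝ)-3)/2 by ring]
    have dF : HasDerivAt F (2/((n:ℝ)^2-1) *
        (((((n:ℝ)+2) * (x ^ (-(3:ℝ)/2)) + (((n:ℝ)+2)*x - 1) * ((-(3:ℝ)/2) * x ^ (-(5:ℝ)/2)))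
          * (1-x) ^ (((n:ℝ)-1)/2))
          + ((((n:ℝ)+2)*x - 1) * x ^ (-(3:ℝ)/2)) * ((((n:ℝ)-1)/2 * (1-x) ^ (((n:ℝ)-3)/2)) * (-1)))) x :=
      ((d1.mul d2).mul d3).const_mul _
    convert dF using 1
    have e1 : x ^ (-(3:ℝ)/2) = x ^ (-(5:ℝ)/2) * x := by
      rw [show (-(3:ℝ)/2) = (-(5:ℝ)/2) + 1 by norm_num, Real.rpow_add_one hx0.ne']
    have e2 : x ^ (-(1:ℝ)/2) = x ^ (-(5:ℝ)/2) * x * x := by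
      rw [show (-(1:ℝ)/2) = (-(5:ℝ)/2) + 1 + 1 by norm_num, Real.rpow_add_one hx0.ne',
        Real.rpow_add_one hx0.ne']
    have e3 : (1-x) ^ (((n:ℝ)-1)/2) = (1-x) ^ (((n:ℝ)-3)/2) * (1-x) := by
      rw [show ((n:ℝ)-1)/2 = ((n:ℝ)-3)/2 + 1 by ring, Real.rpow_add_one h1x.ne']
    have e4 : (1-x) ^ (((n:ℝ)+1)/2) = (1-x) ^ (((n:ℝ)-3)/2) * (1-x) * (1-x) := by
      rw [show ((n:ℝ)+1)/2 = ((n:ℝ)-3)/2 + 1 + 1 by ring, Real.rpow_add_one h1x.ne',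
        Real.rpow_add_one h1x.ne']
    simp only [hgdef, hrdef]
    rw [e1, e2, e3, e4]
    field_simp
    ring
  -- FTC
  have key : ∫ s in w..1, (-(g s) + r s) = F 1 - F w := by
    apply intervalIntegral.integral_eq_sub_of_hasDeriv_right_of_le hw1 hF_cont
      (fun x hx => (hderiv x hx).hasDerivWithinAt) (hg_int.neg.add hr_int)
  have hF1 : F 1 = 0 := by
    simp only [hFdef]
    rw [sub_self, Real.zero_rpow (ne_of_gt (by linarith : (0:ℝ) < ((n:ℝ)-1)/2))]
    ring
  have hsplit : ∫ s in w..1, (-(g s) + r s)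
      = (∫ s in w..1, r s) - ∫ s in w..1, g s := by
    simp_rw [neg_add_eq_sub]
    exact intervalIntegral.integral_sub hr_int hg_int
  have hr_nonneg : 0 ≤ ∫ s in w..1, r s := by
    apply intervalIntegral.integral_nonneg hw1
    intro u hu
    have hu0 : (0:ℝ) ≤ u := le_trans hw0.le hu.1
    have hu1 : (0:ℝ) ≤ 1 - u := by linarith [hu.2]
    have : (0:ℝ) ≤ 3/((n:ℝ)^2-1) := by positivity
    exact mul_nonneg this (mul_nonneg (Real.rpow_nonneg hu0 _) (Real.rpow_nonneg hu1 _))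
  have hFw : F w ≤ ∫ s in w..1, g s := by
    have := key
    rw [hsplit, hF1] at this
    linarith
  have hEq : 2 * (((n:ℝ) + 2) * w - 1) / ((n:ℝ)^2 - 1) * w ^ (-(3:ℝ)/2)
      * (1 - w) ^ (((n:ℝ) - 1)/2) = F w := by
    simp only [hFdef]
    ring
  rw [hEq, ← intervalIntegral.integral_of_le hw1]
  exact hFw
end

section
/- Let n ≥ 2 and let U be uniformly distributed on the unit sphere S^{n-1} ⊂ ℝ^n. Then for any fixed unit vector L ∈ ℝ^n, the random variable ⟨L, U⟩² has the Beta(1/2, (n-1)/2) distribution. -/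
open MeasureTheory ProbabilityTheory Real Set

/-- The uniform (normalized surface) probability measure on the unit sphere of `ℝ^n`,
viewed as a measure on the ambient space `EuclideanSpace ℝ (Fin n)`. -/
noncomputable def sphereUniform (n : ℕ) : Measure (EuclideanSpace ℝ (Fin n)) :=
  (((volume : Measure (EuclideanSpace ℝ (Fin n))).toSphere) Set.univ)⁻¹ •
    (Measure.map Subtype.val ((volume : Measure (EuclideanSpace ℝ (Fin n))).toSphere))

/-- The real Beta function. -/
noncomputable def betaFun (a b : ℝ) : ℝ := Real.Gamma a * Real.Gamma b / Real.Gamma (a + b)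

/-- The Beta(a,b) distribution on ℝ. -/
noncomputable def betaMeasure (a b : ℝ) : Measure ℝ :=
  ((volume : Measure ℝ).restrict (Set.Ioo 0 1)).withDensity
    fun x => ENNReal.ofReal (x ^ (a - 1) * (1 - x) ^ (b - 1) / betaFun a b)

section AuxSphereBeta
open MeasureTheory ProbabilityTheory Real Set Metric


def eTail (m : ℕ) (y : EuclideanSpace ℝ (Fin (m+2))) : EuclideanSpace ℝ (Fin (m+1)) :=
  WithLp.toLp 2 (fun j : Fin (m+1) => y j.succ)


lemma betaFun_pos {a b : ℝ} (ha : 0 < a) (hb : 0 < b) : 0 < betaFun a b :=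
  div_pos (mul_pos (Real.Gamma_pos_of_pos ha) (Real.Gamma_pos_of_pos hb))
    (Real.Gamma_pos_of_pos (add_pos ha hb))

lemma beta_eqOn {a b : ℝ} :
    EqOn (fun x : ℝ => ((x : ℂ)) ^ ((a : ℂ) - 1) * (1 - (x : ℂ)) ^ ((b : ℂ) - 1))
      (fun x : ℝ => ((x ^ (a - 1) * (1 - x) ^ (b - 1) : ℝ) : ℂ)) (Icc 0 1) := by
  intro x hx
  have h1 : ((x ^ (a - 1) : ℝ) : ℂ) = (x : ℂ) ^ ((a : ℂ) - 1) := by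
    rw [Complex.ofReal_cpow hx.1]; push_cast; ring_nf
  have h2 : (((1 - x) ^ (b - 1) : ℝ) : ℂ) = ((1 : ℂ) - (x : ℂ)) ^ ((b : ℂ) - 1) := by
    rw [Complex.ofReal_cpow (by linarith [hx.2] : (0:ℝ) ≤ 1 - x)]; push_cast; ring_nf
  simp only [Complex.ofReal_mul, h1, h2]

lemma realBeta_integrableOn {a b : ℝ} (ha : 0 < a) (hb : 0 < b) :
    IntegrableOn (fun x : ℝ => x ^ (a - 1) * (1 - x) ^ (b - 1)) (Set.Ioc 0 1) := by
  have hconv := Complex.betaIntegral_convergent (u := (a : ℂ)) (v := (b : ℂ))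
    (by simpa using ha) (by simpa using hb)
  rw [intervalIntegrable_iff_integrableOn_Ioc_of_le zero_le_one] at hconv
  have h2 : IntegrableOn (fun x : ℝ => ((x ^ (a - 1) * (1 - x) ^ (b - 1) : ℝ) : ℂ)) (Ioc 0 1) :=
    hconv.congr_fun (fun x hx => beta_eqOn ⟨hx.1.le, hx.2⟩) measurableSet_Ioc
  simpa [IntegrableOn] using h2.re

lemma realBeta_integral {a b : ℝ} (ha : 0 < a) (hb : 0 < b) :
    ∫ x in Ioo (0:ℝ) 1, x ^ (a - 1) * (1 - x) ^ (b - 1) = betaFun a b := by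
  have hc := Complex.Gamma_mul_Gamma_eq_betaIntegral (s := (a:ℂ)) (t := (b:ℂ))
    (by simpa using ha) (by simpa using hb)
  have hInt : Complex.betaIntegral a b
      = ((∫ x in (0:ℝ)..1, x ^ (a - 1) * (1 - x) ^ (b - 1) : ℝ) : ℂ) := by
    rw [Complex.betaIntegral, ← intervalIntegral.integral_ofReal]
    exact intervalIntegral.integral_congr (by
      rw [uIcc_of_le zero_le_one]; exact beta_eqOn)
  rw [hInt, ← Complex.ofReal_add, Complex.Gamma_ofReal, Complex.Gamma_ofReal,
    Complex.Gamma_ofReal, ← Complex.ofReal_mul, ← Complex.ofReal_mul] at hc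
  have hr : Real.Gamma a * Real.Gamma b
      = Real.Gamma (a + b) * ∫ x in (0:ℝ)..1, x ^ (a - 1) * (1 - x) ^ (b - 1) := by
    exact_mod_cast hc
  have hG : Real.Gamma (a + b) ≠ 0 := (Real.Gamma_pos_of_pos (add_pos ha hb)).ne'
  have : ∫ x in (0:ℝ)..1, x ^ (a - 1) * (1 - x) ^ (b - 1) = betaFun a b := by
    rw [betaFun, eq_div_iff hG]; rw [hr]; ring
  rw [← this, intervalIntegral.integral_of_le zero_le_one, integral_Ioc_eq_integral_Ioo]

lemma lintegral_beta {a b : ℝ} (ha : 0 < a) (hb : 0 < b) :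
    ∫⁻ x in Ioo (0:ℝ) 1, ENNReal.ofReal (x ^ (a - 1) * (1 - x) ^ (b - 1))
      = ENNReal.ofReal (betaFun a b) := by
  rw [← realBeta_integral ha hb, ← ofReal_integral_eq_lintegral_ofReal]
  · exact (realBeta_integrableOn ha hb).mono_set Ioo_subset_Ioc_self
  · filter_upwards [ae_restrict_mem measurableSet_Ioo] with x hx
    exact mul_nonneg (Real.rpow_nonneg hx.1.le _) (Real.rpow_nonneg (by linarith [hx.2]) _)

lemma lintegral_cov_1d {s : Set ℝ} (hs : MeasurableSet s) {f f' : ℝ → ℝ}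
    (hf' : ∀ x ∈ s, HasDerivWithinAt f (f' x) s x) (hf : InjOn f s) (g : ℝ → ENNReal) :
    ∫⁻ x in f '' s, g x = ∫⁻ x in s, ENNReal.ofReal |f' x| * g (f x) := by
  simpa only [ContinuousLinearMap.det_toSpanSingleton] using
    lintegral_image_eq_lintegral_abs_det_fderiv_mul volume hs
      (fun x hx => (hf' x hx).hasFDerivWithinAt) hf g

lemma sqrt_mem_Ioo {x : ℝ} (hx : x ∈ Ioo (0:ℝ) 1) : √x ∈ Ioo (0:ℝ) 1 := by
  constructor
  · exact Real.sqrt_pos.2 hx.1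
  · rw [show (1:ℝ) = √1 by simp]
    exact Real.sqrt_lt_sqrt hx.1.le hx.2

lemma arccos_sqrt_image : (fun x : ℝ => arccos (√x)) '' Ioo 0 1 = Ioo 0 (π/2) := by
  ext θ
  constructor
  · rintro ⟨x, hx, rfl⟩
    have h := sqrt_mem_Ioo hx
    exact ⟨Real.arccos_pos.2 h.2, Real.arccos_lt_pi_div_two.2 h.1⟩
  · rintro ⟨h1, h2⟩
    have hc1 : 0 < cos θ := Real.cos_pos_of_mem_Ioo ⟨by linarith [Real.pi_pos], h2⟩
    have hc2 : cos θ < 1 := by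
      have := Real.cos_lt_cos_of_nonneg_of_le_pi (le_refl 0) (by linarith [Real.pi_pos]) h1
      simpa using this
    refine ⟨cos θ ^ 2, ⟨by positivity, by nlinarith⟩, ?_⟩
    show arccos (√(cos θ ^ 2)) = θ
    rw [Real.sqrt_sq hc1.le, Real.arccos_cos h1.le (by linarith [Real.pi_pos])]

lemma arccos_sqrt_injOn : InjOn (fun x : ℝ => arccos (√x)) (Ioo 0 1) := by
  intro x hx y hy hxy
  have h1 : √x = √y := by
    have cx := Real.cos_arccos (by linarith [Real.sqrt_nonneg x] : (-1:ℝ) ≤ √x)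
      (sqrt_mem_Ioo hx).2.le
    have cy := Real.cos_arccos (by linarith [Real.sqrt_nonneg y] : (-1:ℝ) ≤ √y)
      (sqrt_mem_Ioo hy).2.le
    rw [← cx, ← cy]
    simp only at hxy
    rw [hxy]
  exact (Real.sqrt_inj hx.1.le hy.1.le).1 h1

lemma arccos_sqrt_deriv {x : ℝ} (hx : x ∈ Ioo (0:ℝ) 1) :
    HasDerivAt (fun x : ℝ => arccos (√x)) (-(1 / √(1-x) * (1 / (2 * √x)))) x := by
  have h := sqrt_mem_Ioo hx
  have ha := Real.hasDerivAt_arccos (by linarith [h.1] : √x ≠ -1) h.2.ne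
  have hs := Real.hasDerivAt_sqrt hx.1.ne'
  have := ha.comp x hs
  refine this.congr_deriv ?_
  rw [Real.sq_sqrt hx.1.le]
  ring

/-- the transported density identity -/
lemma density_identity (m : ℕ) {x : ℝ} (hx : x ∈ Ioo (0:ℝ) 1) :
    2 * (|(-(1 / √(1-x) * (1 / (2 * √x))))| * (√(1-x)) ^ m)
      = x ^ ((1:ℝ)/2 - 1) * (1 - x) ^ (((m:ℝ)+1)/2 - 1) := by
  have h1 : (0:ℝ) < 1 - x := by linarith [hx.2]
  have hs1 : (0:ℝ) < √(1-x) := Real.sqrt_pos.2 h1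
  have hs2 : (0:ℝ) < √x := Real.sqrt_pos.2 hx.1
  rw [abs_neg, abs_of_pos (by positivity)]
  have e1 : (√(1-x)) ^ m = (1-x) ^ ((m:ℝ)/2) := by
    rw [Real.sqrt_eq_rpow, ← Real.rpow_natCast ((1-x) ^ ((1:ℝ)/2)) m, ← Real.rpow_mul h1.le]
    ring_nf
  have e2 : (1:ℝ) / √(1-x) = (1-x) ^ (-(1:ℝ)/2) := by
    rw [Real.sqrt_eq_rpow, one_div, ← Real.rpow_neg h1.le]
    norm_num
  have e3 : (1:ℝ) / √x = x ^ (-(1:ℝ)/2) := by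
    rw [Real.sqrt_eq_rpow, one_div, ← Real.rpow_neg hx.1.le]
    norm_num
  have lhs_eq : 2 * ((1 / √(1-x) * (1 / (2 * √x))) * (√(1-x)) ^ m)
      = (1 / √x) * ((1 / √(1-x)) * (√(1-x)) ^ m) := by
    field_simp
  rw [lhs_eq, e1, e2, e3, ← Real.rpow_add h1]
  congr 1
  · rw [show (1:ℝ)/2 - 1 = -(1:ℝ)/2 by norm_num]
  · ring

lemma J_eq (m : ℕ) (s : Set ℝ) (hs : MeasurableSet s) :
    ∫⁻ θ in Ioo 0 π,
        s.indicator (fun _ => (1:ENNReal)) (cos θ ^ 2) * ENNReal.ofReal (sin θ ^ m)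
      = ∫⁻ x in s ∩ Ioo (0:ℝ) 1,
          ENNReal.ofReal (x ^ ((1:ℝ)/2 - 1) * (1 - x) ^ (((m:ℝ)+1)/2 - 1)) := by
  set h : ℝ → ENNReal :=
    fun θ => s.indicator (fun _ => (1:ENNReal)) (cos θ ^ 2) * ENNReal.ofReal (sin θ ^ m) with hh
  have hsplit : volume.restrict (Ioo (0:ℝ) π)
      = volume.restrict (Ioo 0 (π/2) ∪ Ioo (π/2) π) := by
    apply Measure.restrict_congr_set
    rw [MeasureTheory.ae_eq_set]
    constructor
    · refine measure_mono_null ?_ (measure_singleton (π/2))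
      rintro x ⟨⟨h1, h2⟩, hx⟩
      simp only [mem_union, mem_Ioo, not_or, not_and_or, not_lt] at hx
      have hx1 := hx.1
      have hx2 := hx.2
      simp only [mem_singleton_iff]
      rcases hx1 with h | h <;> rcases hx2 with h' | h' <;> linarith
    · rw [Set.diff_eq_empty.2]
      · exact measure_empty
      · rintro x (hx | hx) <;> exact ⟨by linarith [hx.1, Real.pi_pos], by linarith [hx.2, Real.pi_pos]⟩
  have hdisj : Disjoint (Ioo (0:ℝ) (π/2)) (Ioo (π/2) π) := by
    rw [Set.disjoint_left]; rintro x ⟨_, h2⟩ ⟨h3, _⟩; linarith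
  have key : ∫⁻ θ in Ioo (0:ℝ) π, h θ
      = (∫⁻ θ in Ioo (0:ℝ) (π/2), h θ) + ∫⁻ θ in Ioo (π/2) π, h θ := by
    rw [show (volume.restrict (Ioo (0:ℝ) π)) = _ from hsplit, lintegral_union measurableSet_Ioo hdisj]
  -- half 1
  have half1 : ∫⁻ θ in Ioo (0:ℝ) (π/2), h θ
      = ∫⁻ x in Ioo (0:ℝ) 1,
          ENNReal.ofReal |(-(1 / √(1-x) * (1 / (2 * √x))))|
            * (s.indicator (fun _ => (1:ENNReal)) x * ENNReal.ofReal ((√(1-x)) ^ m)) := by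
    rw [← arccos_sqrt_image,
      lintegral_cov_1d measurableSet_Ioo (fun x hx => (arccos_sqrt_deriv hx).hasDerivWithinAt)
        arccos_sqrt_injOn h]
    refine setLIntegral_congr_fun measurableSet_Ioo (fun x hx => ?_)
    have h1 := sqrt_mem_Ioo hx
    have hcos : cos (arccos (√x)) = √x := Real.cos_arccos (by linarith [h1.1]) h1.2.le
    have hsin : sin (arccos (√x)) = √(1-x) := by
      rw [Real.sin_arccos, Real.sq_sqrt hx.1.le]
    rw [hh]
    simp only [hcos, hsin, Real.sq_sqrt hx.1.le]
  -- half 2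
  have img2 : (fun x : ℝ => π - arccos (√x)) '' Ioo 0 1 = Ioo (π/2) π := by
    have : (fun x : ℝ => π - arccos (√x)) = (fun θ => π - θ) ∘ (fun x : ℝ => arccos (√x)) := rfl
    rw [this, image_comp, arccos_sqrt_image, Set.image_const_sub_Ioo,
      show π - π/2 = π/2 by ring, sub_zero]
  have half2 : ∫⁻ θ in Ioo (π/2) π, h θ
      = ∫⁻ x in Ioo (0:ℝ) 1,
          ENNReal.ofReal |(-(1 / √(1-x) * (1 / (2 * √x))))|
            * (s.indicator (fun _ => (1:ENNReal)) x * ENNReal.ofReal ((√(1-x)) ^ m)) := by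
    rw [← img2,
      lintegral_cov_1d measurableSet_Ioo
        (f' := fun x => (1 / √(1-x) * (1 / (2 * √x))))
        (fun x hx => by simpa using ((arccos_sqrt_deriv hx).const_sub π).hasDerivWithinAt)
        (fun x hx y hy e => arccos_sqrt_injOn hx hy (by
          have e' : π - arccos (√x) = π - arccos (√y) := e
          simp only
          linarith)) h]
    refine setLIntegral_congr_fun measurableSet_Ioo (fun x hx => ?_)
    have h1 := sqrt_mem_Ioo hx
    have hcos : cos (π - arccos (√x)) = -√x := by
      rw [Real.cos_pi_sub, Real.cos_arccos (by linarith [h1.1]) h1.2.le]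
    have hsin : sin (π - arccos (√x)) = √(1-x) := by
      rw [Real.sin_pi_sub, Real.sin_arccos, Real.sq_sqrt hx.1.le]
    rw [hh]
    simp only [hcos, hsin, neg_sq, Real.sq_sqrt hx.1.le]
    rw [abs_neg, abs_of_nonneg (by positivity : (0:ℝ) ≤ 1 / √(1-x) * (1 / (2 * √x)))]
  rw [key, half1, half2, ← two_mul, ← lintegral_const_mul' _ _ (by norm_num : (2:ENNReal) ≠ ⊤)]
  have : ∀ x ∈ Ioo (0:ℝ) 1,
      2 * (ENNReal.ofReal |(-(1 / √(1-x) * (1 / (2 * √x))))|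
        * (s.indicator (fun _ => (1:ENNReal)) x * ENNReal.ofReal ((√(1-x)) ^ m)))
      = s.indicator (fun x => ENNReal.ofReal (x ^ ((1:ℝ)/2 - 1) * (1 - x) ^ (((m:ℝ)+1)/2 - 1))) x := by
    intro x hx
    by_cases hxs : x ∈ s
    · simp only [Set.indicator_of_mem hxs]
      rw [one_mul, ← ENNReal.ofReal_mul (abs_nonneg _), ← ENNReal.ofReal_ofNat 2,
        ← ENNReal.ofReal_mul (by norm_num : (0:ℝ) ≤ 2), density_identity m hx]
    · simp [Set.indicator_of_notMem hxs]
  rw [setLIntegral_congr_fun measurableSet_Ioo this,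
    lintegral_indicator hs, Measure.restrict_restrict hs]

lemma polar_image :
    ⇑polarCoord.symm '' (Ioo (0:ℝ) 1 ×ˢ Ioo 0 π)
      = {p : ℝ × ℝ | 0 < p.2 ∧ p.1^2 + p.2^2 < 1} := by
  ext p
  constructor
  · rintro ⟨⟨ρ, θ⟩, ⟨hρ, hθ⟩, rfl⟩
    rw [mem_Ioo] at hρ hθ
    have hsin : 0 < sin θ := Real.sin_pos_of_pos_of_lt_pi hθ.1 hθ.2
    have hsum : (ρ * cos θ)^2 + (ρ * sin θ)^2 = ρ^2 := by
      have h := Real.sin_sq_add_cos_sq θ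
      ring_nf
      nlinarith
    simp only [polarCoord_symm_apply, mem_setOf_eq]
    refine ⟨mul_pos hρ.1 hsin, ?_⟩
    rw [hsum]
    nlinarith [hρ.1, hρ.2]
  · rintro ⟨hp2, hlt⟩
    have hsum : 0 < p.1^2 + p.2^2 := by positivity
    set r := √(p.1^2 + p.2^2) with hrdef
    have hr : 0 < r := Real.sqrt_pos.2 hsum
    have hr2 : r^2 = p.1^2 + p.2^2 := Real.sq_sqrt hsum.le
    have hr1 : r < 1 := by
      have : r < √1 := Real.sqrt_lt_sqrt hsum.le hlt
      simpa using this
    have habs : |p.1| < r := by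
      rw [← Real.sqrt_sq_eq_abs]
      exact Real.sqrt_lt_sqrt (sq_nonneg _) (by nlinarith [pow_pos hp2 2])
    have hdiv : -1 < p.1 / r ∧ p.1 / r < 1 := by
      apply abs_lt.1
      rw [abs_div, abs_of_pos hr]
      exact (div_lt_one hr).2 habs
    refine ⟨(r, arccos (p.1 / r)), ⟨⟨hr, hr1⟩, ⟨Real.arccos_pos.2 hdiv.2, ?_⟩⟩, ?_⟩
    · refine lt_of_le_of_ne (Real.arccos_le_pi _) ?_
      rw [Ne, Real.arccos_eq_pi]
      intro h
      linarith [hdiv.1]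
    · have hcos : cos (arccos (p.1 / r)) = p.1 / r := Real.cos_arccos hdiv.1.le hdiv.2.le
      have hsin : sin (arccos (p.1 / r)) = p.2 / r := by
        rw [Real.sin_arccos]
        have h1 : 1 - (p.1 / r) ^ 2 = (p.2 / r)^2 := by
          field_simp
          linarith [hr2]
        rw [h1, Real.sqrt_sq (div_nonneg hp2.le hr.le)]
      simp only [polarCoord_symm_apply, hcos, hsin]
      ext <;> simp <;> field_simp
lemma polar_box_subset : Ioo (0:ℝ) 1 ×ˢ Ioo 0 π ⊆ polarCoord.symm.source := by
  rw [OpenPartialHomeomorph.symm_source, polarCoord_target]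
  rintro ⟨ρ, θ⟩ ⟨h1, h2⟩
  rw [mem_Ioo] at h1
  rw [mem_Ioo] at h2
  exact ⟨h1.1, by constructor <;> [linarith [Real.pi_pos, h2.1]; exact h2.2]⟩

lemma polar_step (m : ℕ) (s : Set ℝ) (hs : MeasurableSet s) :
    ∫⁻ p in {p : ℝ × ℝ | 0 < p.2 ∧ p.1^2 + p.2^2 < 1 ∧ p.1^2/(p.1^2+p.2^2) ∈ s},
        ENNReal.ofReal (p.2 ^ m)
      = (∫⁻ ρ in Ioo (0:ℝ) 1, ENNReal.ofReal (ρ ^ (m+1)))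
        * ∫⁻ θ in Ioo 0 π,
            s.indicator (fun _ => (1:ENNReal)) (cos θ ^ 2) * ENNReal.ofReal (sin θ ^ m) := by
  set B : ℝ × ℝ → ℝ × ℝ →L[ℝ] ℝ × ℝ := fun p =>
    LinearMap.toContinuousLinearMap (Matrix.toLin (Module.Basis.finTwoProd ℝ) (Module.Basis.finTwoProd ℝ)
      !![cos p.2, -p.1 * sin p.2; sin p.2, p.1 * cos p.2]) with hB
  have B_det : ∀ p, (B p).det = p.1 := by
    intro p
    conv_rhs => rw [← one_mul p.1, ← Real.cos_sq_add_sin_sq p.2]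
    simp only [hB, neg_mul, LinearMap.det_toContinuousLinearMap, LinearMap.det_toLin,
      Matrix.det_fin_two_of, sub_neg_eq_add]
    ring
  set U : Set (ℝ × ℝ) := {p | 0 < p.2 ∧ p.1^2 + p.2^2 < 1} with hU
  set V : Set (ℝ × ℝ) := {p | p.1^2/(p.1^2+p.2^2) ∈ s} with hVdef
  have hV : MeasurableSet V :=
    (((measurable_fst.pow_const 2).div
      ((measurable_fst.pow_const 2).add (measurable_snd.pow_const 2))) hs)
  have hset : {p : ℝ × ℝ | 0 < p.2 ∧ p.1^2 + p.2^2 < 1 ∧ p.1^2/(p.1^2+p.2^2) ∈ s}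
      = V ∩ U := by
    ext p; simp only [hU, hVdef, mem_setOf_eq, mem_inter_iff]; tauto
  have hbox : MeasurableSet (Ioo (0:ℝ) 1 ×ˢ Ioo 0 π) := measurableSet_Ioo.prod measurableSet_Ioo
  rw [hset, ← Measure.restrict_restrict hV, ← lintegral_indicator hV, hU, ← polar_image,
    lintegral_image_eq_lintegral_abs_det_fderiv_mul volume hbox
      (fun p _ => (hasFDerivAt_polarCoord_symm p).hasFDerivWithinAt)
      (polarCoord.symm.injOn.mono polar_box_subset)]
  have hpt : ∀ q ∈ Ioo (0:ℝ) 1 ×ˢ Ioo 0 π,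
      ENNReal.ofReal |(fderivPolarCoordSymm q).det|
          * V.indicator (fun p => ENNReal.ofReal (p.2 ^ m)) (polarCoord.symm q)
      = ENNReal.ofReal (q.1 ^ (m+1))
          * (s.indicator (fun _ => (1:ENNReal)) (cos q.2 ^ 2) * ENNReal.ofReal (sin q.2 ^ m)) := by
    rintro ⟨ρ, θ⟩ ⟨hρ, hθ⟩
    rw [mem_Ioo] at hρ
    rw [mem_Ioo] at hθ
    have hsin : 0 < sin θ := Real.sin_pos_of_pos_of_lt_pi hθ.1 hθ.2
    have hsum : (ρ * cos θ)^2 + (ρ * sin θ)^2 = ρ^2 := by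
      have h := Real.sin_sq_add_cos_sq θ
      ring_nf
      nlinarith
    have hratio : (ρ * cos θ)^2 / ((ρ * cos θ)^2 + (ρ * sin θ)^2) = cos θ ^ 2 := by
      rw [hsum, mul_pow]
      exact mul_div_cancel_left₀ _ (pow_ne_zero 2 hρ.1.ne')
    have hmem : polarCoord.symm (ρ, θ) ∈ V ↔ cos θ ^ 2 ∈ s := by
      rw [polarCoord_symm_apply]
      show (ρ * cos θ)^2 / ((ρ * cos θ)^2 + (ρ * sin θ)^2) ∈ s ↔ _
      rw [hratio]
    rw [det_fderivPolarCoordSymm]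
    by_cases hc : cos θ ^ 2 ∈ s
    · rw [Set.indicator_of_mem (hmem.2 hc), Set.indicator_of_mem hc, one_mul,
        polarCoord_symm_apply]
      rw [← ENNReal.ofReal_mul (abs_nonneg _), ← ENNReal.ofReal_mul (pow_nonneg hρ.1.le _)]
      congr 1
      rw [abs_of_pos hρ.1, mul_pow]
      ring
    · rw [Set.indicator_of_notMem (fun h => hc (hmem.1 h)), Set.indicator_of_notMem hc,
        mul_zero, zero_mul, mul_zero]
  rw [setLIntegral_congr_fun hbox hpt, Measure.volume_eq_prod,
    ← Measure.prod_restrict]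
  exact lintegral_prod_mul
    (ENNReal.measurable_ofReal.comp (measurable_id.pow_const _)).aemeasurable
    (((measurable_const.indicator hs).comp ((Real.measurable_cos).pow_const 2)).mul
      (ENNReal.measurable_ofReal.comp ((Real.measurable_sin).pow_const m))).aemeasurable

lemma norm_set_measure (m : ℕ) (S : Set ℝ) (hS : MeasurableSet S) :
    (volume : Measure (EuclideanSpace ℝ (Fin (m+1)))) {z | ‖z‖ ∈ S}
      = (volume : Measure (EuclideanSpace ℝ (Fin (m+1)))).toSphere univ
          * ∫⁻ r in S ∩ Ioi (0:ℝ), ENNReal.ofReal (r ^ m) := by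
  set E := EuclideanSpace ℝ (Fin (m+1))
  set μ : Measure E := volume
  have hmp := μ.measurePreserving_homeomorphUnitSphereProd
  rw [show Module.finrank ℝ E = m + 1 from finrank_euclideanSpace_fin, Nat.add_sub_cancel] at hmp
  -- the subset of radii
  set R : Set (Ioi (0:ℝ)) := {r | (r : ℝ) ∈ S} with hR
  have hRmeas : MeasurableSet R := measurable_subtype_coe hS
  have hzero : μ ({0} : Set E) = 0 := measure_singleton 0
  have hB : {z : E | ‖z‖ ∈ S} =ᵐ[μ] {z : E | z ≠ 0 ∧ ‖z‖ ∈ S} := by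
    rw [MeasureTheory.ae_eq_set]
    constructor
    · refine measure_mono_null ?_ hzero
      rintro z ⟨hz, hz2⟩
      simp only [mem_setOf_eq, not_and_or, not_not] at hz2
      rcases hz2 with h | h
      · simpa using h
      · exact absurd hz h
    · refine measure_mono_null ?_ (measure_empty (μ := μ))
      rintro z ⟨⟨_, hz⟩, hz2⟩
      exact absurd hz hz2
  rw [measure_congr hB]
  have hkey : Subtype.val ''
      ((homeomorphUnitSphereProd E) ⁻¹' ((univ : Set (sphere (0:E) 1)) ×ˢ R))
      = {z : E | z ≠ 0 ∧ ‖z‖ ∈ S} := by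
    ext z
    simp only [mem_image, mem_setOf_eq]
    constructor
    · rintro ⟨⟨x, hx⟩, hmem, rfl⟩
      simp only [mem_preimage, mem_prod, mem_univ, true_and] at hmem
      refine ⟨hx, ?_⟩
      simpa [hR] using hmem
    · rintro ⟨hz, hzS⟩
      refine ⟨⟨z, hz⟩, ?_, rfl⟩
      simp only [mem_preimage, mem_prod, mem_univ, true_and]
      simpa [hR] using hzS
  rw [← hkey, ← (MeasurableEmbedding.subtype_coe
      (measurableSet_singleton (0:E)).compl).comap_apply,
    hmp.measure_preimage ((MeasurableSet.univ.prod hRmeas).nullMeasurableSet),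
    Measure.prod_prod]
  have himg : Subtype.val '' R = S ∩ Ioi (0:ℝ) := by
    ext x
    simp only [mem_image, mem_inter_iff, mem_Ioi]
    constructor
    · rintro ⟨⟨r, hr⟩, hmem, rfl⟩
      exact ⟨by simpa [hR] using hmem, hr⟩
    · rintro ⟨hxS, hx0⟩
      exact ⟨⟨x, hx0⟩, by simpa [hR] using hxS, rfl⟩
  congr 1
  rw [Measure.volumeIoiPow, withDensity_apply _ hRmeas,
    setLIntegral_subtype measurableSet_Ioi R (fun a => ENNReal.ofReal (a ^ m)), himg]

lemma toSphere_univ_ne_zero (m : ℕ) :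
    (volume : Measure (EuclideanSpace ℝ (Fin (m+1)))).toSphere univ ≠ 0 := by
  rw [Measure.toSphere_apply_univ]
  refine mul_ne_zero ?_ ?_
  · simp [finrank_euclideanSpace_fin]
  · exact (Metric.measure_ball_pos _ _ one_pos).ne'

lemma toSphere_univ_ne_top (m : ℕ) :
    (volume : Measure (EuclideanSpace ℝ (Fin (m+1)))).toSphere univ ≠ ⊤ :=
  measure_ne_top _ _


lemma Wmeas (m : ℕ) (s : Set ℝ) (hs : MeasurableSet s) :
    MeasurableSet {p : ℝ × ℝ | 0 < p.2 ∧ p.1^2 + p.2^2 < 1 ∧ p.1^2/(p.1^2+p.2^2) ∈ s} := by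
  refine (measurableSet_lt measurable_const measurable_snd).inter
    ((measurableSet_lt ((measurable_fst.pow_const 2).add (measurable_snd.pow_const 2))
      measurable_const).inter ?_)
  exact ((measurable_fst.pow_const 2).div
    ((measurable_fst.pow_const 2).add (measurable_snd.pow_const 2))) hs

lemma prodvol_G (m : ℕ) (s : Set ℝ) (hs : MeasurableSet s) :
    ((volume : Measure ℝ).prod (volume : Measure (EuclideanSpace ℝ (Fin (m+1)))))
        {p | p.1^2 + ‖p.2‖^2 < 1 ∧ 0 < p.1^2 + ‖p.2‖^2 ∧ p.1^2/(p.1^2+‖p.2‖^2) ∈ s}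
      = (volume : Measure (EuclideanSpace ℝ (Fin (m+1)))).toSphere univ
          * ∫⁻ p in {p : ℝ × ℝ | 0 < p.2 ∧ p.1^2 + p.2^2 < 1 ∧ p.1^2/(p.1^2+p.2^2) ∈ s},
              ENNReal.ofReal (p.2 ^ m) := by
  set κ := (volume : Measure (EuclideanSpace ℝ (Fin (m+1)))).toSphere univ with hκ
  set W : Set (ℝ × ℝ) := {p | 0 < p.2 ∧ p.1^2 + p.2^2 < 1 ∧ p.1^2/(p.1^2+p.2^2) ∈ s} with hW
  have hWmeas : MeasurableSet W := Wmeas m s hs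
  set F : ℝ × ℝ → ENNReal := W.indicator (fun p => ENNReal.ofReal (p.2 ^ m)) with hF
  have hFmeas : Measurable F :=
    (ENNReal.measurable_ofReal.comp (measurable_snd.pow_const m)).indicator hWmeas
  have hG : MeasurableSet {p : ℝ × EuclideanSpace ℝ (Fin (m+1)) |
      p.1^2 + ‖p.2‖^2 < 1 ∧ 0 < p.1^2 + ‖p.2‖^2 ∧ p.1^2/(p.1^2+‖p.2‖^2) ∈ s} := by
    have hsum : Measurable fun p : ℝ × EuclideanSpace ℝ (Fin (m+1)) => p.1^2 + ‖p.2‖^2 :=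
      (measurable_fst.pow_const 2).add ((measurable_snd.norm).pow_const 2)
    refine (measurableSet_lt hsum measurable_const).inter
      ((measurableSet_lt measurable_const hsum).inter ?_)
    exact ((measurable_fst.pow_const 2).div hsum) hs
  rw [Measure.prod_apply hG]
  have hslice : ∀ a : ℝ,
      (volume : Measure (EuclideanSpace ℝ (Fin (m+1))))
        (Prod.mk a ⁻¹' {p : ℝ × EuclideanSpace ℝ (Fin (m+1)) |
          p.1^2 + ‖p.2‖^2 < 1 ∧ 0 < p.1^2 + ‖p.2‖^2 ∧ p.1^2/(p.1^2+‖p.2‖^2) ∈ s})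
      = κ * ∫⁻ r, F (a, r) := by
    intro a
    have hSa : MeasurableSet {r : ℝ | a^2 + r^2 < 1 ∧ 0 < a^2 + r^2 ∧ a^2/(a^2+r^2) ∈ s} := by
      have hsum : Measurable fun r : ℝ => a^2 + r^2 :=
        measurable_const.add (measurable_id.pow_const 2)
      refine (measurableSet_lt hsum measurable_const).inter
        ((measurableSet_lt measurable_const hsum).inter ?_)
      exact (measurable_const.div hsum) hs
    have h1 : Prod.mk a ⁻¹' {p : ℝ × EuclideanSpace ℝ (Fin (m+1)) |
          p.1^2 + ‖p.2‖^2 < 1 ∧ 0 < p.1^2 + ‖p.2‖^2 ∧ p.1^2/(p.1^2+‖p.2‖^2) ∈ s}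
        = {z | ‖z‖ ∈ {r : ℝ | a^2 + r^2 < 1 ∧ 0 < a^2 + r^2 ∧ a^2/(a^2+r^2) ∈ s}} := rfl
    rw [h1, norm_set_measure m _ hSa]
    congr 1
    have h2 : {r : ℝ | a^2 + r^2 < 1 ∧ 0 < a^2 + r^2 ∧ a^2/(a^2+r^2) ∈ s} ∩ Ioi 0
        = Prod.mk a ⁻¹' W := by
      ext r
      simp only [hW, mem_inter_iff, mem_setOf_eq, mem_Ioi, mem_preimage]
      constructor
      · rintro ⟨⟨h1, _, h3⟩, h4⟩
        exact ⟨h4, h1, h3⟩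
      · rintro ⟨h4, h1, h3⟩
        exact ⟨⟨h1, by positivity, h3⟩, h4⟩
    rw [h2, ← lintegral_indicator (hWmeas.preimage (measurable_prodMk_left))]
    apply lintegral_congr
    intro r
    by_cases hr : (a, r) ∈ W
    · rw [hF, Set.indicator_of_mem hr, Set.indicator_of_mem (show r ∈ Prod.mk a ⁻¹' W from hr)]
    · rw [hF, Set.indicator_of_notMem hr,
        Set.indicator_of_notMem (show r ∉ Prod.mk a ⁻¹' W from hr)]
  calc ∫⁻ a, (volume : Measure (EuclideanSpace ℝ (Fin (m+1))))
        (Prod.mk a ⁻¹' {p : ℝ × EuclideanSpace ℝ (Fin (m+1)) |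
          p.1^2 + ‖p.2‖^2 < 1 ∧ 0 < p.1^2 + ‖p.2‖^2 ∧ p.1^2/(p.1^2+‖p.2‖^2) ∈ s})
      = ∫⁻ a, κ * ∫⁻ r, F (a, r) := lintegral_congr hslice
    _ = κ * ∫⁻ a, ∫⁻ r, F (a, r) := lintegral_const_mul' κ _ (toSphere_univ_ne_top m)
    _ = κ * ∫⁻ p, F p ∂((volume : Measure ℝ).prod (volume : Measure ℝ)) := by
        rw [lintegral_prod F hFmeas.aemeasurable]
    _ = κ * ∫⁻ p in W, ENNReal.ofReal (p.2 ^ m) ∂((volume : Measure ℝ).prod volume) := by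
        rw [hF, lintegral_indicator hWmeas]
    _ = κ * ∫⁻ p in W, ENNReal.ofReal (p.2 ^ m) := by rw [← Measure.volume_eq_prod]

lemma split_measure (m : ℕ) (A : Set (ℝ × EuclideanSpace ℝ (Fin (m+1)))) (hA : MeasurableSet A) :
    (volume : Measure (EuclideanSpace ℝ (Fin (m+2))))
        {y | ((y 0 : ℝ), eTail m y) ∈ A}
      = ((volume : Measure ℝ).prod (volume : Measure (EuclideanSpace ℝ (Fin (m+1))))) A := by
  have m1 := EuclideanSpace.volume_preserving_symm_measurableEquiv_toLp (Fin (m+2))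
  have m2 := measurePreserving_piFinSuccAbove (fun _ : Fin (m+2) => (volume : Measure ℝ)) 0
  have m3 := (MeasurePreserving.id (volume : Measure ℝ)).prod
      (EuclideanSpace.volume_preserving_symm_measurableEquiv_toLp (Fin (m+1))).symm
  have hcomp := (m3.comp (m2.comp m1))
  have hfun : (Prod.map id ⇑(MeasurableEquiv.toLp 2 (Fin (m+1) → ℝ)).symm.symm ∘
      (⇑(MeasurableEquiv.piFinSuccAbove (fun _ : Fin (m+2) => ℝ) 0) ∘
        ⇑(MeasurableEquiv.toLp 2 (Fin (m+2) → ℝ)).symm))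
      = fun y : EuclideanSpace ℝ (Fin (m+2)) =>
          ((y 0 : ℝ), eTail m y) := by
    funext y
    rfl
  rw [hfun] at hcomp
  exact hcomp.measure_preimage hA.nullMeasurableSet


lemma norm_sq_eq_sum (k : ℕ) (z : EuclideanSpace ℝ (Fin k)) : ‖z‖^2 = ∑ i, (z i)^2 := by
  rw [EuclideanSpace.norm_eq, Real.sq_sqrt (by positivity)]
  exact Finset.sum_congr rfl fun i _ => by rw [Real.norm_eq_abs, sq_abs]

lemma norm_split (m : ℕ) (y : EuclideanSpace ℝ (Fin (m+2))) :
    ‖y‖^2 = (y 0)^2 + ‖eTail m y‖^2 := by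
  rw [norm_sq_eq_sum, Fin.sum_univ_succ, norm_sq_eq_sum]
  rfl

lemma reduce_to_coord (m : ℕ) (L : EuclideanSpace ℝ (Fin (m+2))) (hL : ‖L‖ = 1)
    (s : Set ℝ) (hs : MeasurableSet s) :
    (volume : Measure (EuclideanSpace ℝ (Fin (m+2))))
        {x | ‖x‖^2 < 1 ∧ 0 < ‖x‖^2 ∧ (inner ℝ L x : ℝ)^2/‖x‖^2 ∈ s}
      = ((volume : Measure ℝ).prod (volume : Measure (EuclideanSpace ℝ (Fin (m+1)))))
          {p | p.1^2 + ‖p.2‖^2 < 1 ∧ 0 < p.1^2 + ‖p.2‖^2 ∧ p.1^2/(p.1^2+‖p.2‖^2) ∈ s} := by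
  have hG : MeasurableSet {p : ℝ × EuclideanSpace ℝ (Fin (m+1)) |
      p.1^2 + ‖p.2‖^2 < 1 ∧ 0 < p.1^2 + ‖p.2‖^2 ∧ p.1^2/(p.1^2+‖p.2‖^2) ∈ s} := by
    have hsum : Measurable fun p : ℝ × EuclideanSpace ℝ (Fin (m+1)) => p.1^2 + ‖p.2‖^2 :=
      (measurable_fst.pow_const 2).add ((measurable_snd.norm).pow_const 2)
    refine (measurableSet_lt hsum measurable_const).inter
      ((measurableSet_lt measurable_const hsum).inter ?_)
    exact ((measurable_fst.pow_const 2).div hsum) hs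
  -- orthonormal basis with b 0 = L
  have hortho : Orthonormal ℝ (({0} : Set (Fin (m+2))).restrict
      (fun _ => L : Fin (m+2) → EuclideanSpace ℝ (Fin (m+2)))) := by
    constructor
    · intro i
      exact hL
    · intro i j hij
      exact absurd (Subsingleton.elim i j) hij
  obtain ⟨b, hb⟩ := hortho.exists_orthonormalBasis_extension_of_card_eq
    (by simp [finrank_euclideanSpace_fin])
  have hbL : b 0 = L := hb 0 rfl
  have hrepr : ∀ x, (b.repr x) 0 = (inner ℝ L x : ℝ) := fun x => by
    rw [b.repr_apply_apply, hbL]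
  have hcoord : Measurable fun y : EuclideanSpace ℝ (Fin (m+2)) => y 0 :=
    (measurable_pi_apply 0).comp (MeasurableEquiv.toLp 2 (Fin (m+2) → ℝ)).symm.measurable
  have hnormm : Measurable fun y : EuclideanSpace ℝ (Fin (m+2)) => ‖y‖ := measurable_norm
  have hD : MeasurableSet {y : EuclideanSpace ℝ (Fin (m+2)) |
      ‖y‖^2 < 1 ∧ 0 < ‖y‖^2 ∧ (y 0)^2/‖y‖^2 ∈ s} := by
    refine (measurableSet_lt (hnormm.pow_const 2) measurable_const).inter
      ((measurableSet_lt measurable_const (hnormm.pow_const 2)).inter ?_)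
    exact ((hcoord.pow_const 2).div (hnormm.pow_const 2)) hs
  have step1 : {x : EuclideanSpace ℝ (Fin (m+2)) |
      ‖x‖^2 < 1 ∧ 0 < ‖x‖^2 ∧ (inner ℝ L x : ℝ)^2/‖x‖^2 ∈ s}
      = ⇑b.repr ⁻¹' {y : EuclideanSpace ℝ (Fin (m+2)) |
          ‖y‖^2 < 1 ∧ 0 < ‖y‖^2 ∧ (y 0)^2/‖y‖^2 ∈ s} := by
    ext x
    simp only [mem_setOf_eq, mem_preimage, LinearIsometryEquiv.norm_map, hrepr]
  have step2 : {y : EuclideanSpace ℝ (Fin (m+2)) |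
      ‖y‖^2 < 1 ∧ 0 < ‖y‖^2 ∧ (y 0)^2/‖y‖^2 ∈ s}
      = {y : EuclideanSpace ℝ (Fin (m+2)) |
          ((y 0 : ℝ), eTail m y) ∈
            {p : ℝ × EuclideanSpace ℝ (Fin (m+1)) |
              p.1^2 + ‖p.2‖^2 < 1 ∧ 0 < p.1^2 + ‖p.2‖^2 ∧ p.1^2/(p.1^2+‖p.2‖^2) ∈ s}} := by
    ext y
    simp only [mem_setOf_eq, ← norm_split m y]
  rw [step1, b.measurePreserving_repr.measure_preimage hD.nullMeasurableSet, step2,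
    split_measure m _ hG]

lemma sphere_key (m : ℕ) (L : EuclideanSpace ℝ (Fin (m+2))) (s : Set ℝ)
    (hs : MeasurableSet s) :
    (volume : Measure (EuclideanSpace ℝ (Fin (m+2)))).toSphere
        {u : Metric.sphere (0 : EuclideanSpace ℝ (Fin (m+2))) 1 | (inner ℝ L u.val : ℝ)^2 ∈ s}
      * ENNReal.ofReal (1/((m:ℝ)+2))
    = (volume : Measure (EuclideanSpace ℝ (Fin (m+2))))
        {x | ‖x‖^2 < 1 ∧ 0 < ‖x‖^2 ∧ (inner ℝ L x : ℝ)^2/‖x‖^2 ∈ s} := by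
  have hmp := (volume : Measure (EuclideanSpace ℝ (Fin (m+2)))).measurePreserving_homeomorphUnitSphereProd
  rw [show Module.finrank ℝ (EuclideanSpace ℝ (Fin (m+2))) = m + 2 from finrank_euclideanSpace_fin] at hmp
  set A : Set (Metric.sphere (0 : EuclideanSpace ℝ (Fin (m+2))) 1) := {u | (inner ℝ L u.val : ℝ)^2 ∈ s} with hA
  have hAmeas : MeasurableSet A :=
    (((continuous_const.inner continuous_subtype_val).pow 2).measurable) hs
  have hval : Measure.volumeIoiPow (m + 2 - 1) (Iio ⟨1, mem_Ioi.2 one_pos⟩)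
      = ENNReal.ofReal (1/((m:ℝ)+2)) := by
    rw [Measure.volumeIoiPow_apply_Iio]
    norm_num
    ring_nf
  have hprod : ((volume : Measure (EuclideanSpace ℝ (Fin (m+2)))).toSphere.prod
        (Measure.volumeIoiPow (m + 2 - 1)))
        (A ×ˢ Iio ⟨1, mem_Ioi.2 one_pos⟩)
      = (volume : Measure (EuclideanSpace ℝ (Fin (m+2)))).toSphere A
          * ENNReal.ofReal (1/((m:ℝ)+2)) := by
    rw [Measure.prod_prod, hval]
  rw [← hprod, ← hmp.measure_preimage
      ((hAmeas.prod measurableSet_Iio).nullMeasurableSet),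
    (MeasurableEmbedding.subtype_coe
        (measurableSet_singleton (0:EuclideanSpace ℝ (Fin (m+2)))).compl).comap_apply]
  congr 1
  ext x
  simp only [mem_image, mem_preimage, mem_prod, mem_setOf_eq]
  constructor
  · rintro ⟨⟨x', hx'⟩, ⟨hmem1, hmem2⟩, rfl⟩
    have hx0 : x' ≠ 0 := hx'
    have hn : 0 < ‖x'‖ := norm_pos_iff.2 hx0
    have hfst : ((homeomorphUnitSphereProd (EuclideanSpace ℝ (Fin (m+2))) ⟨x', hx'⟩).1
          : EuclideanSpace ℝ (Fin (m+2))) = ‖x'‖⁻¹ • x' :=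
      homeomorphUnitSphereProd_apply_fst_coe _ ⟨x', hx'⟩
    have hsnd : ((homeomorphUnitSphereProd (EuclideanSpace ℝ (Fin (m+2))) ⟨x', hx'⟩).2 : ℝ)
        = ‖x'‖ :=
      homeomorphUnitSphereProd_apply_snd_coe _ ⟨x', hx'⟩
    rw [hA, mem_setOf_eq, hfst] at hmem1
    have hlt : ‖x'‖ < 1 := by
      have h := hmem2
      rw [mem_Iio, ← Subtype.coe_lt_coe, hsnd] at h
      exact h
    refine ⟨?_, pow_pos hn 2, ?_⟩
    · nlinarith
    · have : (inner ℝ L (‖x'‖⁻¹ • x') : ℝ)^2 = (inner ℝ L x' : ℝ)^2 / ‖x'‖^2 := by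
        rw [real_inner_smul_right, mul_pow, inv_pow, ← div_eq_inv_mul]
      rwa [this] at hmem1
  · rintro ⟨h1, h2, h3⟩
    have hn : 0 < ‖x‖ := by nlinarith [norm_nonneg x]
    have hx0 : x ≠ 0 := norm_pos_iff.1 hn
    refine ⟨⟨x, hx0⟩, ⟨?_, ?_⟩, rfl⟩
    · rw [hA, mem_setOf_eq, homeomorphUnitSphereProd_apply_fst_coe]
      rw [real_inner_smul_right, mul_pow, inv_pow, ← div_eq_inv_mul]
      exact h3
    · rw [mem_Iio, ← Subtype.coe_lt_coe]
      rw [homeomorphUnitSphereProd_apply_snd_coe]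
      show ‖x‖ < (1:ℝ)
      nlinarith [norm_nonneg x]

end AuxSphereBeta


theorem inner_sq_betaDistributed (n : ℕ) (hn : 2 ≤ n)
    (L : EuclideanSpace ℝ (Fin n)) (hL : ‖L‖ = 1) :
    Measure.map (fun u : EuclideanSpace ℝ (Fin n) => (inner ℝ L u : ℝ) ^ 2)
        (sphereUniform n)
      = _root_.betaMeasure (1/2) (((n:ℝ) - 1)/2) := by
  obtain ⟨m, rfl⟩ : ∃ m, n = m + 2 := ⟨n - 2, by omega⟩
  have hT : Measurable (fun u : EuclideanSpace ℝ (Fin (m+2)) => (inner ℝ L u : ℝ) ^ 2) :=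
    ((continuous_const.inner continuous_id).pow 2).measurable
  set κ := (volume : Measure (EuclideanSpace ℝ (Fin (m+1)))).toSphere univ with hκdef
  set c₂ := ∫⁻ ρ in Ioo (0:ℝ) 1, ENNReal.ofReal (ρ ^ (m+1)) with hc₂def
  set Λ : Set ℝ → ENNReal := fun s =>
    ∫⁻ x in s ∩ Ioo (0:ℝ) 1,
      ENNReal.ofReal (x ^ ((1:ℝ)/2 - 1) * (1-x) ^ (((m:ℝ)+1)/2 - 1)) with hΛdef
  set k := ENNReal.ofReal (1/((m:ℝ)+2)) with hkdef
  have hk0 : k ≠ 0 := (ENNReal.ofReal_pos.2 (by positivity)).ne'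
  have hktop : k ≠ ⊤ := ENNReal.ofReal_ne_top
  -- the central computation
  have hchain : ∀ s : Set ℝ, MeasurableSet s →
      (volume : Measure (EuclideanSpace ℝ (Fin (m+2)))).toSphere
        {u : Metric.sphere (0 : EuclideanSpace ℝ (Fin (m+2))) 1 | (inner ℝ L u.val : ℝ)^2 ∈ s}
      = (k⁻¹ * (κ * c₂)) * Λ s := by
    intro s hs
    set X := (volume : Measure (EuclideanSpace ℝ (Fin (m+2)))).toSphere
        {u : Metric.sphere (0 : EuclideanSpace ℝ (Fin (m+2))) 1 | (inner ℝ L u.val : ℝ)^2 ∈ s}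
      with hX
    have h1 : X * k = κ * (c₂ * Λ s) := by
      rw [hX, hkdef, sphere_key m L s hs, reduce_to_coord m L hL s hs, prodvol_G m s hs,
        polar_step m s hs, J_eq m s hs]
    calc X = X * k * k⁻¹ := by rw [mul_assoc, ENNReal.mul_inv_cancel hk0 hktop, mul_one]
      _ = κ * (c₂ * Λ s) * k⁻¹ := by rw [h1]
      _ = (k⁻¹ * (κ * c₂)) * Λ s := by ring
  have hβpos : 0 < betaFun (1/2) (((m:ℝ)+1)/2) := betaFun_pos (by norm_num) (by positivity)
  have hΛuniv : Λ univ = ENNReal.ofReal (betaFun (1/2) (((m:ℝ)+1)/2)) := by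
    rw [hΛdef]
    simp only [univ_inter]
    exact lintegral_beta (by norm_num) (by positivity)
  have hΛu0 : Λ univ ≠ 0 := by rw [hΛuniv]; exact (ENNReal.ofReal_pos.2 hβpos).ne'
  have hΛutop : Λ univ ≠ ⊤ := by rw [hΛuniv]; exact ENNReal.ofReal_ne_top
  -- c₂ bounds
  have hc₂top : c₂ ≠ ⊤ := by
    refine ne_top_of_le_ne_top (b := volume (Ioo (0:ℝ) 1)) (by simp [Real.volume_Ioo]) ?_
    rw [hc₂def, ← setLIntegral_one (Ioo (0:ℝ) 1)]
    refine setLIntegral_mono measurable_const fun x hx => ?_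
    exact ENNReal.ofReal_le_one.2 (pow_le_one₀ hx.1.le hx.2.le)
  have hc₂0 : c₂ ≠ 0 := by
    have h1 : ENNReal.ofReal ((1/2:ℝ)^(m+1)) * volume (Ioo (1/2:ℝ) 1) ≤ c₂ := by
      rw [← setLIntegral_const (Ioo (1/2:ℝ) 1) _, hc₂def]
      refine le_trans (setLIntegral_mono
        (ENNReal.measurable_ofReal.comp (measurable_id.pow_const _)) fun x hx => ?_)
        (lintegral_mono_set (Ioo_subset_Ioo (by norm_num) le_rfl))
      exact ENNReal.ofReal_le_ofReal (pow_le_pow_left₀ (by norm_num) hx.1.le _)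
    intro h
    rw [h, le_zero_iff, mul_eq_zero] at h1
    rcases h1 with h1 | h1
    · exact (ENNReal.ofReal_pos.2 (by positivity)).ne' h1
    · rw [Real.volume_Ioo] at h1
      exact (ENNReal.ofReal_pos.2 (by norm_num)).ne' h1
  set cC := k⁻¹ * (κ * c₂) with hcCdef
  have hcC0 : cC ≠ 0 :=
    mul_ne_zero (ENNReal.inv_ne_zero.2 hktop) (mul_ne_zero (toSphere_univ_ne_zero m) hc₂0)
  have hcCtop : cC ≠ ⊤ :=
    ENNReal.mul_ne_top (ENNReal.inv_ne_top.2 hk0)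
      (ENNReal.mul_ne_top (toSphere_univ_ne_top m) hc₂top)
  have hAuniv : {u : Metric.sphere (0 : EuclideanSpace ℝ (Fin (m+2))) 1 |
      (inner ℝ L u.val : ℝ)^2 ∈ (univ : Set ℝ)} = univ := by ext u; simp
  have huniv : (volume : Measure (EuclideanSpace ℝ (Fin (m+2)))).toSphere univ = cC * Λ univ := by
    rw [← hAuniv]; exact hchain univ MeasurableSet.univ
  -- density measurability
  have hdens : Measurable (fun x : ℝ =>
      ENNReal.ofReal (x ^ ((1:ℝ)/2-1) * (1-x) ^ (((m:ℝ)+1)/2-1))) := by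
    fun_prop
  refine Measure.ext fun s hs => ?_
  rw [sphereUniform, Measure.map_smul, Measure.smul_apply,
    Measure.map_map hT measurable_subtype_coe,
    Measure.map_apply (hT.comp measurable_subtype_coe) hs, smul_eq_mul]
  have hpre : ((fun u : EuclideanSpace ℝ (Fin (m+2)) => (inner ℝ L u : ℝ)^2) ∘ Subtype.val) ⁻¹' s
      = {u : Metric.sphere (0 : EuclideanSpace ℝ (Fin (m+2))) 1 |
          (inner ℝ L u.val : ℝ)^2 ∈ s} := rfl
  rw [hpre, hchain s hs, huniv]
  -- RHS
  have hcast : (((m+2:ℕ):ℝ) - 1)/2 = ((m:ℝ)+1)/2 := by push_cast; ring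
  rw [_root_.betaMeasure, withDensity_apply _ hs, Measure.restrict_restrict hs, hcast]
  have hgoal : ∀ x : ℝ,
      ENNReal.ofReal (x ^ ((1:ℝ)/2 - 1) * (1-x) ^ (((m:ℝ)+1)/2 - 1)
        / betaFun (1/2) (((m:ℝ)+1)/2))
      = ENNReal.ofReal (x ^ ((1:ℝ)/2 - 1) * (1-x) ^ (((m:ℝ)+1)/2 - 1))
        * (ENNReal.ofReal (betaFun (1/2) (((m:ℝ)+1)/2)))⁻¹ := fun x => by
    rw [ENNReal.ofReal_div_of_pos hβpos, div_eq_mul_inv]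
  simp only [hgoal]
  rw [lintegral_mul_const _ hdens]
  show (cC * Λ univ)⁻¹ * (cC * Λ s) = Λ s * (ENNReal.ofReal (betaFun (1/2) (((m:ℝ)+1)/2)))⁻¹
  rw [← hΛuniv, ENNReal.mul_inv (Or.inl hcC0) (Or.inl hcCtop)]
  calc cC⁻¹ * (Λ univ)⁻¹ * (cC * Λ s) = (cC⁻¹ * cC) * ((Λ univ)⁻¹ * Λ s) := by ring
    _ = Λ s * (Λ univ)⁻¹ := by rw [ENNReal.inv_mul_cancel hcC0 hcCtop, one_mul, mul_comm]
end

section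
/- Let n ≥ 2, let L ∈ ℝ^n be a unit vector, and let U be uniformly distributed on S^{n-1}. Then for every t with 0 < t < 1, P(|⟨L,U⟩| > √t) ≤ √(2/((n-1)π)) · (1-t)^{(n-1)/2}/√t. -/
open MeasureTheory ProbabilityTheory Real Set
open scoped Pointwise ENNReal

lemma gamma_ratio_lower {x : ℝ} (hx : (1:ℝ)/2 ≤ x) (hx0 : 0 < x) :
    Real.sqrt (x - 1/2) * Real.Gamma x ≤ Real.Gamma (x + 1/2) := by
  have h1 : Real.Gamma (x + 1) ≤ Real.Gamma (x + 1/2) * Real.sqrt (x + 1/2) := by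
    have hconv := Real.convexOn_log_Gamma
    have hmem1 : x + 1/2 ∈ Ioi (0:ℝ) := by simp; linarith
    have hmem2 : x + 3/2 ∈ Ioi (0:ℝ) := by simp; linarith
    have := hconv.2 hmem1 hmem2 (by norm_num : (0:ℝ) ≤ 1/2) (by norm_num : (0:ℝ) ≤ 1/2) (by norm_num)
    simp only [smul_eq_mul, Function.comp_apply] at this
    have hmid : (1/2 : ℝ) * (x + 1/2) + (1/2 : ℝ) * (x + 3/2) = x + 1 := by ring
    rw [hmid] at this
    have hg1 : 0 < Real.Gamma (x + 1/2) := Real.Gamma_pos_of_pos (by linarith)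
    have hg2 : 0 < Real.Gamma (x + 3/2) := Real.Gamma_pos_of_pos (by linarith)
    have hg3 : Real.Gamma (x + 3/2) = (x + 1/2) * Real.Gamma (x + 1/2) := by
      have := Real.Gamma_add_one (show x + 1/2 ≠ 0 by positivity)
      rw [← this]; ring_nf
    have h4 : Real.log (Real.Gamma (x+1)) ≤ Real.log (Real.Gamma (x+1/2) * Real.sqrt (x+1/2)) := by
      calc Real.log (Real.Gamma (x+1)) ≤ 1/2 * Real.log (Real.Gamma (x+1/2)) + 1/2 * Real.log (Real.Gamma (x+3/2)) := this
        _ = Real.log (Real.Gamma (x+1/2) * Real.sqrt (x+1/2)) := by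
            rw [hg3, Real.log_mul (by positivity) (by positivity),
              Real.log_mul (by positivity) (by positivity), Real.log_sqrt (by positivity)]
            ring
    have := Real.exp_le_exp.mpr h4
    rwa [Real.exp_log (Real.Gamma_pos_of_pos (by linarith)),
      Real.exp_log (by positivity)] at this
  have hg0 : 0 < Real.Gamma x := Real.Gamma_pos_of_pos hx0
  have h2 : x * Real.Gamma x ≤ Real.Gamma (x + 1/2) * Real.sqrt (x + 1/2) := by
    rw [← Real.Gamma_add_one hx0.ne']; exact h1
  have hs : Real.sqrt (x - 1/2) * Real.sqrt (x + 1/2) ≤ x := by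
    rw [← Real.sqrt_mul (by linarith)]
    calc Real.sqrt ((x - 1/2) * (x + 1/2)) ≤ Real.sqrt (x^2) := by
          apply Real.sqrt_le_sqrt; nlinarith
      _ = x := by rw [Real.sqrt_sq hx0.le]
  have hsp : 0 < Real.sqrt (x + 1/2) := Real.sqrt_pos.mpr (by linarith)
  nlinarith [Real.sqrt_nonneg (x - 1/2), Real.Gamma_pos_of_pos (show (0:ℝ) < x + 1/2 by linarith)]


noncomputable def hFun (t : ℝ) (m : ℕ) (s : ℝ) : ℝ :=
  if s^2 ≤ t then (Real.sqrt ((1-t)/t) * |s|)^m else (1-s^2) ^ ((m:ℝ)/2)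

lemma sqrt_pow_eq_rpow {a : ℝ} (ha : 0 ≤ a) (m : ℕ) :
    (Real.sqrt a) ^ m = a ^ ((m:ℝ)/2) := by
  rw [Real.sqrt_eq_rpow, ← Real.rpow_natCast (a ^ ((1:ℝ)/2)) m, ← Real.rpow_mul ha]
  ring_nf

lemma rpow_branch_continuous (m : ℕ) : Continuous (fun s : ℝ => (1-s^2) ^ ((m:ℝ)/2)) :=
  (continuous_const.sub (continuous_pow 2)).rpow_const (fun _ => Or.inr (by positivity))

lemma hFun_measurable (t : ℝ) (m : ℕ) : Measurable (hFun t m) := by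
  unfold hFun
  refine Measurable.ite ?_ ?_ ?_
  · exact measurableSet_le (by measurability) measurable_const
  · measurability
  · exact (rpow_branch_continuous m).measurable

lemma hFun_nonneg {t : ℝ} (ht0 : 0 < t) (ht1 : t < 1) (m : ℕ) {s : ℝ} (hs : s ∈ Icc (-1:ℝ) 1) :
    0 ≤ hFun t m s := by
  unfold hFun
  split_ifs
  · positivity
  · apply Real.rpow_nonneg
    nlinarith [hs.1, hs.2]

lemma hFun_le_one {t : ℝ} (ht0 : 0 < t) (ht1 : t < 1) (m : ℕ) {s : ℝ} (hs : s ∈ Icc (-1:ℝ) 1) :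
    hFun t m s ≤ 1 := by
  have habs : |s| ≤ 1 := abs_le.mpr ⟨hs.1, hs.2⟩
  unfold hFun
  split_ifs with h
  · have hcs : Real.sqrt ((1-t)/t) * |s| ≤ 1 := by
      calc Real.sqrt ((1-t)/t) * |s| ≤ Real.sqrt ((1-t)/t) * Real.sqrt t := by
            apply mul_le_mul_of_nonneg_left _ (Real.sqrt_nonneg _)
            rw [← Real.sqrt_sq (abs_nonneg s)]
            exact Real.sqrt_le_sqrt (by rwa [sq_abs])
        _ = Real.sqrt (1-t) := by
            rw [← Real.sqrt_mul (div_nonneg (by linarith) ht0.le), div_mul_cancel₀ _ ht0.ne']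
        _ ≤ 1 := Real.sqrt_le_one.mpr (by linarith)
    calc (Real.sqrt ((1-t)/t) * |s|)^m ≤ 1^m := by
          apply pow_le_pow_left₀ (by positivity) hcs
      _ = 1 := one_pow m
  · exact Real.rpow_le_one (by nlinarith [hs.1, hs.2]) (by nlinarith [hs.1, hs.2]) (by positivity)

lemma hFun_integrableOn {t : ℝ} (ht0 : 0 < t) (ht1 : t < 1) (m : ℕ) :
    IntegrableOn (hFun t m) (Icc (-1:ℝ) 1) volume := by
  apply Measure.integrableOn_of_bounded (M := 1)
  · simp [Real.volume_Icc]
  · exact (hFun_measurable t m).aestronglyMeasurable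
  · filter_upwards [ae_restrict_mem measurableSet_Icc] with s hs
    rw [Real.norm_eq_abs, abs_of_nonneg (hFun_nonneg ht0 ht1 m hs)]
    exact hFun_le_one ht0 ht1 m hs

lemma ftc_piece {t : ℝ} (ht0 : 0 < t) (ht1 : t < 1) (m : ℕ) :
    ∫ s in Real.sqrt t..1, s * (1-s^2) ^ ((m:ℝ)/2) = (1-t) ^ ((m:ℝ)/2 + 1) / ((m:ℝ)+2) := by
  set p : ℝ := (m:ℝ)/2 + 1 with hp
  have hp1 : (1:ℝ) ≤ p := by
    rw [hp]; have : (0:ℝ) ≤ (m:ℝ)/2 := by positivity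
    linarith
  have hd : ∀ x ∈ uIcc (Real.sqrt t) 1,
      HasDerivAt (fun s => -(1-s^2) ^ p / ((m:ℝ)+2)) (x * (1-x^2) ^ ((m:ℝ)/2)) x := by
    intro x _
    have h1 : HasDerivAt (fun s:ℝ => (1:ℝ)-s^2) (-(2*x)) x := by
      simpa using ((hasDerivAt_pow 2 x).const_sub 1)
    have h2 : HasDerivAt (fun s:ℝ => ((1:ℝ)-s^2) ^ p) (p * (1-x^2) ^ (p-1) * (-(2*x))) x :=
      (Real.hasDerivAt_rpow_const (Or.inr hp1)).comp x h1
    have h3 : HasDerivAt (fun s => -(1-s^2) ^ p / ((m:ℝ)+2))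
        (-(p * (1 - x ^ 2) ^ (p - 1) * -(2 * x)) / ((m:ℝ) + 2)) x := (h2.neg).div_const ((m:ℝ)+2)
    convert h3 using 1
    have : p - 1 = (m:ℝ)/2 := by rw [hp]; ring
    rw [this, hp]
    field_simp
  rw [intervalIntegral.integral_eq_sub_of_hasDerivAt hd]
  · have h1 : (1:ℝ) - 1^2 = 0 := by norm_num
    have h2 : (1:ℝ) - (Real.sqrt t)^2 = 1 - t := by rw [Real.sq_sqrt ht0.le]
    rw [h1, h2, Real.zero_rpow (by positivity)]
    ring
  · exact ((continuous_id.mul (rpow_branch_continuous m))).intervalIntegrable _ _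

lemma hFun_integral_le {t : ℝ} (ht0 : 0 < t) (ht1 : t < 1) {m : ℕ} (hm : 1 ≤ m) :
    ∫ s in Ioo (-1:ℝ) 1, hFun t m s ≤
      2 * ((1-t) ^ ((m:ℝ)/2) * (Real.sqrt t/((m:ℝ)+1) + (1-t)/(((m:ℝ)+2)*Real.sqrt t))) := by
  have hst : 0 < Real.sqrt t := Real.sqrt_pos.mpr ht0
  have hst1 : Real.sqrt t ≤ 1 := Real.sqrt_le_one.mpr ht1.le
  have htt : Real.sqrt t ^ 2 = t := Real.sq_sqrt ht0.le
  set c : ℝ := Real.sqrt ((1-t)/t) with hc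
  have hct : c * Real.sqrt t = Real.sqrt (1-t) := by
    rw [hc, ← Real.sqrt_mul (div_nonneg (by linarith) ht0.le), div_mul_cancel₀ _ ht0.ne']
  -- interval integrability
  have hii : ∀ a b : ℝ, a ∈ Icc (-1:ℝ) 1 → b ∈ Icc (-1:ℝ) 1 →
      IntervalIntegrable (hFun t m) volume a b := by
    intro a b ha hb
    rw [intervalIntegrable_iff]
    exact (hFun_integrableOn ht0 ht1 m).mono_set
      ((Set.uIoc_subset_uIcc).trans (Set.uIcc_subset_Icc ha hb))
  have hm1 : (-1:ℝ) ∈ Icc (-1:ℝ) 1 := by norm_num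
  have h0m : (0:ℝ) ∈ Icc (-1:ℝ) 1 := by norm_num
  have h1m : (1:ℝ) ∈ Icc (-1:ℝ) 1 := by norm_num
  have hsm : Real.sqrt t ∈ Icc (-1:ℝ) 1 := ⟨by linarith, hst1⟩
  -- pass to interval integral
  have hIoo : ∫ s in Ioo (-1:ℝ) 1, hFun t m s = ∫ s in (-1:ℝ)..1, hFun t m s := by
    rw [intervalIntegral.integral_of_le (by norm_num), integral_Ioc_eq_integral_Ioo]
  -- evenness
  have heven : ∀ s, hFun t m (-s) = hFun t m s := by
    intro s; simp [hFun, neg_sq]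
  have hneg : ∫ s in (-1:ℝ)..0, hFun t m s = ∫ s in (0:ℝ)..1, hFun t m s := by
    have := intervalIntegral.integral_comp_neg (a := (0:ℝ)) (b := 1) (fun s => hFun t m s)
    simp only [neg_zero] at this
    rw [← this]
    exact intervalIntegral.integral_congr (fun s _ => heven s)
  -- split
  have hsplit1 : ∫ s in (-1:ℝ)..1, hFun t m s
      = (∫ s in (-1:ℝ)..0, hFun t m s) + ∫ s in (0:ℝ)..1, hFun t m s :=
    (intervalIntegral.integral_add_adjacent_intervals (hii _ _ hm1 h0m) (hii _ _ h0m h1m)).symm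
  have hsplit2 : ∫ s in (0:ℝ)..1, hFun t m s
      = (∫ s in (0:ℝ)..(Real.sqrt t), hFun t m s) + ∫ s in (Real.sqrt t)..1, hFun t m s :=
    (intervalIntegral.integral_add_adjacent_intervals (hii _ _ h0m hsm) (hii _ _ hsm h1m)).symm
  -- piece A
  have hA : ∫ s in (0:ℝ)..(Real.sqrt t), hFun t m s
      = (1-t) ^ ((m:ℝ)/2) * Real.sqrt t / ((m:ℝ)+1) := by
    have hcongr : ∫ s in (0:ℝ)..(Real.sqrt t), hFun t m s
        = ∫ s in (0:ℝ)..(Real.sqrt t), c^m * s^m := by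
      apply intervalIntegral.integral_congr
      intro s hs
      rw [Set.uIcc_of_le hst.le] at hs
      have hs0 : 0 ≤ s := hs.1
      have hst' : s ≤ Real.sqrt t := hs.2
      have : s^2 ≤ t := by nlinarith
      simp only [hFun, if_pos this, abs_of_nonneg hs0, mul_pow, ← hc]
    rw [hcongr, intervalIntegral.integral_const_mul, integral_pow]
    have key : c^m * Real.sqrt t ^ (m+1) = (1-t) ^ ((m:ℝ)/2) * Real.sqrt t := by
      rw [pow_succ, ← mul_assoc, ← mul_pow, hct, sqrt_pow_eq_rpow (by linarith)]
    rw [zero_pow (by omega), sub_zero, mul_div_assoc', key]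
  -- piece B
  have hBcongr : ∫ s in (Real.sqrt t)..1, hFun t m s
      = ∫ s in (Real.sqrt t)..1, (1-s^2) ^ ((m:ℝ)/2) := by
    apply intervalIntegral.integral_congr
    intro s hs
    rw [Set.uIcc_of_le hst1] at hs
    by_cases h : s^2 ≤ t
    · have hseq : s = Real.sqrt t := by nlinarith [hs.1, hs.2, Real.sqrt_nonneg t]
      simp only [hFun, if_pos h, hseq, abs_of_nonneg hst.le, ← hc, hct, htt,
        sqrt_pow_eq_rpow (show (0:ℝ) ≤ 1 - t by linarith)]
      rw [if_pos (le_refl t)]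
    · simp only [hFun, if_neg h]
  have hBle : ∫ s in (Real.sqrt t)..1, (1-s^2) ^ ((m:ℝ)/2)
      ≤ ∫ s in (Real.sqrt t)..1, (s / Real.sqrt t) * (1-s^2) ^ ((m:ℝ)/2) := by
    apply intervalIntegral.integral_mono_on hst1
    · exact (rpow_branch_continuous m).intervalIntegrable _ _
    · exact (((continuous_id.div_const _)).mul (rpow_branch_continuous m)).intervalIntegrable _ _
    · intro s hs
      have h1 : (1:ℝ) ≤ s / Real.sqrt t := (one_le_div hst).mpr hs.1
      have h2 : (0:ℝ) ≤ (1-s^2) ^ ((m:ℝ)/2) := Real.rpow_nonneg (by nlinarith [hs.1, hs.2]) _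
      nlinarith
  have hBval : ∫ s in (Real.sqrt t)..1, (s / Real.sqrt t) * (1-s^2) ^ ((m:ℝ)/2)
      = (1-t) ^ ((m:ℝ)/2) * ((1-t)/(((m:ℝ)+2) * Real.sqrt t)) := by
    have : ∫ s in (Real.sqrt t)..1, (s / Real.sqrt t) * (1-s^2) ^ ((m:ℝ)/2)
        = ∫ s in (Real.sqrt t)..1, (Real.sqrt t)⁻¹ * (s * (1-s^2) ^ ((m:ℝ)/2)) := by
      apply intervalIntegral.integral_congr
      intro s _
      ring
    rw [this, intervalIntegral.integral_const_mul, ftc_piece ht0 ht1 m,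
      Real.rpow_add_one (show (1:ℝ) - t ≠ 0 from (by linarith : (0:ℝ) < 1 - t).ne'),
      div_mul_eq_div_div]
    ring
  calc ∫ s in Ioo (-1:ℝ) 1, hFun t m s
      = (∫ s in (0:ℝ)..(Real.sqrt t), hFun t m s) + (∫ s in (0:ℝ)..(Real.sqrt t), hFun t m s)
        + ((∫ s in (Real.sqrt t)..1, hFun t m s) + (∫ s in (Real.sqrt t)..1, hFun t m s)) := by
        rw [hIoo, hsplit1, hneg, hsplit2]; ring
    _ ≤ ((1-t) ^ ((m:ℝ)/2) * Real.sqrt t / ((m:ℝ)+1) + (1-t) ^ ((m:ℝ)/2) * Real.sqrt t / ((m:ℝ)+1))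
        + ((1-t) ^ ((m:ℝ)/2) * ((1-t)/(((m:ℝ)+2) * Real.sqrt t))
          + (1-t) ^ ((m:ℝ)/2) * ((1-t)/(((m:ℝ)+2) * Real.sqrt t))) := by
        have hB2 : (∫ s in (Real.sqrt t)..1, hFun t m s)
            ≤ (1-t) ^ ((m:ℝ)/2) * ((1-t)/(((m:ℝ)+2) * Real.sqrt t)) := by
          rw [hBcongr]; exact hBle.trans_eq hBval
        linarith [hA, hB2]
    _ = 2 * ((1-t) ^ ((m:ℝ)/2) * (Real.sqrt t/((m:ℝ)+1) + (1-t)/(((m:ℝ)+2)*Real.sqrt t))) := by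
        ring

lemma final_algebra (m : ℕ) (hm : 1 ≤ m) {t : ℝ} (ht0 : 0 < t) (ht1 : t < 1) :
    (2 * ((1-t) ^ ((m:ℝ)/2) * (Real.sqrt t/((m:ℝ)+1) + (1-t)/(((m:ℝ)+2)*Real.sqrt t))))
      * (Real.sqrt π ^ m / Real.Gamma ((m:ℝ)/2+1))
      / (Real.sqrt π ^ (m+1) / Real.Gamma (((m:ℝ)+1)/2+1))
    ≤ Real.sqrt (2/((m:ℝ)*π)) * (1-t) ^ ((m:ℝ)/2) / Real.sqrt t := by
  have hm1 : (1:ℝ) ≤ (m:ℝ) := by exact_mod_cast hm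
  have hπ : (0:ℝ) < π := Real.pi_pos
  have hsπ : (0:ℝ) < Real.sqrt π := Real.sqrt_pos.mpr hπ
  have hsm : (0:ℝ) < Real.sqrt m := Real.sqrt_pos.mpr (by linarith)
  have ha : (0:ℝ) < Real.sqrt t := Real.sqrt_pos.mpr ht0
  set a := Real.sqrt t with hadef
  have ha2 : a * a = t := Real.mul_self_sqrt ht0.le
  set A := (1-t) ^ ((m:ℝ)/2) with hAdef
  have hA : (0:ℝ) < A := Real.rpow_pos_of_pos (by linarith) _
  set g1 := Real.Gamma ((m:ℝ)/2+1) with hg1def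
  set g2 := Real.Gamma (((m:ℝ)+1)/2) with hg2def
  have hg1 : (0:ℝ) < g1 := Real.Gamma_pos_of_pos (by positivity)
  have hg2 : (0:ℝ) < g2 := Real.Gamma_pos_of_pos (by positivity)
  -- Γ((m+1)/2 + 1) = ((m+1)/2) * g2
  have hG2 : Real.Gamma (((m:ℝ)+1)/2+1) = (((m:ℝ)+1)/2) * g2 := by
    rw [Real.Gamma_add_one (by positivity)]
  -- key Gamma inequality: √m * g2 ≤ √2 * g1
  have hkey : Real.sqrt m * g2 ≤ Real.sqrt 2 * g1 := by
    have h := gamma_ratio_lower (x := ((m:ℝ)+1)/2) (by linarith) (by positivity)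
    rw [show ((m:ℝ)+1)/2 - 1/2 = (m:ℝ)/2 by ring, show ((m:ℝ)+1)/2 + 1/2 = (m:ℝ)/2+1 by ring]
      at h
    have hdiv : Real.sqrt ((m:ℝ)/2) = Real.sqrt m / Real.sqrt 2 := Real.sqrt_div (by linarith) 2
    rw [hdiv, div_mul_eq_mul_div, div_le_iff₀ (by positivity)] at h
    calc Real.sqrt m * g2 ≤ g1 * Real.sqrt 2 := h
      _ = Real.sqrt 2 * g1 := by ring
  -- sum bound
  have hsum : a/((m:ℝ)+1) + (1-t)/(((m:ℝ)+2)*a) ≤ 1/(((m:ℝ)+1)*a) := by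
    rw [div_add_div _ _ (by positivity) (by positivity), div_le_div_iff₀ (by positivity)
      (by positivity)]
    have h1 : a*(((m:ℝ)+2)*a) = ((m:ℝ)+2)*t := by rw [← ha2]; ring
    nlinarith [h1, mul_nonneg (mul_nonneg (by linarith : (0:ℝ) ≤ (m:ℝ)+1) ha.le)
      (by linarith : (0:ℝ) ≤ 1 - t)]
  -- rewrite LHS
  have hL : (2 * (A * (a/((m:ℝ)+1) + (1-t)/(((m:ℝ)+2)*a))))
      * (Real.sqrt π ^ m / g1) / (Real.sqrt π ^ (m+1) / Real.Gamma (((m:ℝ)+1)/2+1))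
      = (a/((m:ℝ)+1) + (1-t)/(((m:ℝ)+2)*a)) * (A * ((m:ℝ)+1) * g2 / (g1 * Real.sqrt π)) := by
    rw [hG2, pow_succ]
    have hπm : (0:ℝ) < Real.sqrt π ^ m := by positivity
    field_simp
  rw [hL]
  -- rewrite RHS
  have hR : Real.sqrt (2/((m:ℝ)*π)) * A / a = Real.sqrt 2 * A / (Real.sqrt m * Real.sqrt π * a) := by
    rw [Real.sqrt_div (by norm_num : (0:ℝ) ≤ 2), Real.sqrt_mul (by linarith : (0:ℝ) ≤ (m:ℝ))]
    ring
  rw [hR]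
  calc (a/((m:ℝ)+1) + (1-t)/(((m:ℝ)+2)*a)) * (A * ((m:ℝ)+1) * g2 / (g1 * Real.sqrt π))
      ≤ (1/(((m:ℝ)+1)*a)) * (A * ((m:ℝ)+1) * g2 / (g1 * Real.sqrt π)) := by
        apply mul_le_mul_of_nonneg_right hsum
        positivity
    _ = A * g2 / (a * g1 * Real.sqrt π) := by
        field_simp
    _ ≤ Real.sqrt 2 * A / (Real.sqrt m * Real.sqrt π * a) := by
        rw [div_le_div_iff₀ (by positivity) (by positivity)]
        nlinarith [mul_le_mul_of_nonneg_left hkey (le_of_lt (mul_pos (mul_pos hA ha) hsπ))]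

-- volume of sublevel sets of sum of squares in Pi space
lemma pi_sum_sq_lt_volume (m : ℕ) (hm : 1 ≤ m) {r : ℝ} (hr : 0 ≤ r) :
    volume {y : Fin m → ℝ | ∑ j, y j^2 < r^2}
      = ENNReal.ofReal (r^m) * volume (Metric.ball (0 : EuclideanSpace ℝ (Fin m)) 1) := by
  haveI : Nonempty (Fin m) := ⟨⟨0, hm⟩⟩
  haveI : Nontrivial (EuclideanSpace ℝ (Fin m)) := by
    apply Module.nontrivial_of_finrank_pos (R := ℝ) (M := EuclideanSpace ℝ (Fin m))
    rw [finrank_euclideanSpace_fin]; omega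
  rcases hr.eq_or_lt with h | h
  · have h0 : {y : Fin m → ℝ | ∑ j, y j^2 < r^2} = ∅ := by
      ext y; simp only [mem_setOf_eq, mem_empty_iff_false, iff_false, not_lt, ← h]
      norm_num
      positivity
    rw [h0, ← h, measure_empty, zero_pow (by omega), ENNReal.ofReal_zero, zero_mul]
  · have hpre : ((MeasurableEquiv.toLp 2 (Fin m → ℝ)).symm) ⁻¹' {y : Fin m → ℝ | ∑ j, y j^2 < r^2}
        = Metric.ball (0 : EuclideanSpace ℝ (Fin m)) r := by
      ext z
      simp only [mem_preimage, mem_setOf_eq, Metric.mem_ball, dist_zero_right]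
      have hz : ∀ j, ((MeasurableEquiv.toLp 2 (Fin m → ℝ)).symm) z j = z j := fun j => rfl
      simp_rw [hz]
      rw [EuclideanSpace.norm_eq, Real.sqrt_lt' h]
      simp_rw [Real.norm_eq_abs, sq_abs]
    have hmeas : MeasurableSet {y : Fin m → ℝ | ∑ j, y j^2 < r^2} :=
      measurableSet_lt (by measurability) measurable_const
    have := (EuclideanSpace.volume_preserving_symm_measurableEquiv_toLp (Fin m)).measure_preimage
      hmeas.nullMeasurableSet
    rw [hpre] at this
    rw [← this, Measure.addHaar_ball volume _ hr, finrank_euclideanSpace_fin]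

theorem single_inner_tail_bound (n : ℕ) (hn : 2 ≤ n)
    (L : EuclideanSpace ℝ (Fin n)) (hL : ‖L‖ = 1) (t : ℝ) (ht0 : 0 < t) (ht1 : t < 1) :
    ((sphereUniform n) {u | Real.sqrt t < |(inner ℝ L u : ℝ)|}).toReal
      ≤ Real.sqrt (2 / (((n:ℝ) - 1) * Real.pi)) * (1 - t) ^ (((n:ℝ) - 1)/2) / Real.sqrt t := by
  obtain ⟨m, rfl⟩ : ∃ m, n = m + 1 := ⟨n - 1, by omega⟩
  have hm : 1 ≤ m := by omega
  have hst : 0 < Real.sqrt t := Real.sqrt_pos.mpr ht0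
  set Aset : Set (EuclideanSpace ℝ (Fin (m+1))) := {u | Real.sqrt t < |(inner ℝ L u : ℝ)|}
    with hAdef
  have hinnercont : Continuous fun u : EuclideanSpace ℝ (Fin (m+1)) => (inner ℝ L u : ℝ) :=
    continuous_const.inner continuous_id
  have hAmeas : MeasurableSet Aset := measurableSet_lt measurable_const hinnercont.abs.measurable
  set C : Set (EuclideanSpace ℝ (Fin (m+1))) :=
    {x | ‖x‖ < 1 ∧ Real.sqrt t * ‖x‖ < |(inner ℝ L x : ℝ)|} with hCdef
  have hCmeas : MeasurableSet C := by
    apply MeasurableSet.inter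
    · exact measurableSet_lt continuous_norm.measurable measurable_const
    · exact measurableSet_lt (measurable_const.mul continuous_norm.measurable)
        hinnercont.abs.measurable
  -- set identity
  have hset : (Ioo (0:ℝ) 1) • (Subtype.val ''
      (Subtype.val ⁻¹' Aset : Set (Metric.sphere (0:EuclideanSpace ℝ (Fin (m+1))) 1))) = C := by
    rw [Subtype.image_preimage_coe]
    ext x
    constructor
    · rintro ⟨r, hr, y, ⟨hy_s, hy_A⟩, rfl⟩
      rw [mem_Ioo] at hr
      have hy1 : ‖y‖ = 1 := mem_sphere_zero_iff_norm.mp hy_s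
      rw [hAdef, mem_setOf_eq] at hy_A
      constructor
      · rw [norm_smul, hy1, Real.norm_eq_abs, abs_of_pos hr.1, mul_one]; exact hr.2
      · rw [norm_smul, hy1, Real.norm_eq_abs, abs_of_pos hr.1, real_inner_smul_right, abs_mul,
          abs_of_pos hr.1, mul_one]
        calc Real.sqrt t * r = r * Real.sqrt t := mul_comm _ _
          _ < r * |(inner ℝ L y : ℝ)| := by exact mul_lt_mul_of_pos_left hy_A hr.1
    · rintro ⟨h1, h2⟩
      have hcs : |(inner ℝ L x : ℝ)| ≤ ‖x‖ := by
        have := abs_real_inner_le_norm L x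
        rwa [hL, one_mul] at this
      have hxpos : 0 < ‖x‖ := by
        rcases (norm_nonneg x).eq_or_lt with h | h
        · exfalso; rw [← h] at h2 hcs
          rw [mul_zero] at h2; linarith
        · exact h
      have hx0 : x ≠ 0 := norm_pos_iff.mp hxpos
      refine ⟨‖x‖, mem_Ioo.mpr ⟨hxpos, h1⟩, (‖x‖⁻¹ : ℝ) • x, ⟨?_, ?_⟩, ?_⟩
      · exact mem_sphere_zero_iff_norm.mpr (norm_smul_inv_norm hx0)
      · rw [hAdef, mem_setOf_eq, real_inner_smul_right, abs_mul,
          abs_of_pos (inv_pos.mpr hxpos)]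
        rw [← mul_lt_mul_iff_right₀ hxpos, ← mul_assoc, mul_inv_cancel₀ hxpos.ne', one_mul,
          mul_comm ‖x‖ (Real.sqrt t)]
        exact h2
      · exact smul_inv_smul₀ hxpos.ne' x
  -- measure computation
  have hdim : Module.finrank ℝ (EuclideanSpace ℝ (Fin (m+1))) = m+1 := finrank_euclideanSpace_fin
  have hν : (volume : Measure (EuclideanSpace ℝ (Fin (m+1)))).toSphere (Subtype.val ⁻¹' Aset)
      = (m+1 : ℝ≥0∞) * volume C := by
    rw [Measure.toSphere_apply' _ (hAmeas.preimage measurable_subtype_coe), hset, hdim]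
    norm_cast
  have hνu : (volume : Measure (EuclideanSpace ℝ (Fin (m+1)))).toSphere Set.univ
      = (m+1 : ℝ≥0∞) * volume (Metric.ball (0:EuclideanSpace ℝ (Fin (m+1))) 1) := by
    rw [Measure.toSphere_apply_univ, hdim]
    norm_cast
  have hP : sphereUniform (m+1) Aset
      = (volume (Metric.ball (0:EuclideanSpace ℝ (Fin (m+1))) 1))⁻¹ * volume C := by
    rw [sphereUniform, Measure.smul_apply,
      Measure.map_apply measurable_subtype_coe hAmeas, hν, hνu, smul_eq_mul,
      ENNReal.mul_inv (Or.inl (by simp)) (Or.inl (by simp))]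
    calc ((m+1:ℝ≥0∞))⁻¹ * (volume (Metric.ball (0:EuclideanSpace ℝ (Fin (m+1))) 1))⁻¹
          * ((m+1:ℝ≥0∞) * volume C)
        = ((m+1:ℝ≥0∞))⁻¹ * (m+1:ℝ≥0∞) *
          ((volume (Metric.ball (0:EuclideanSpace ℝ (Fin (m+1))) 1))⁻¹ * volume C) := by ring
      _ = (volume (Metric.ball (0:EuclideanSpace ℝ (Fin (m+1))) 1))⁻¹ * volume C := by
          rw [ENNReal.inv_mul_cancel (by simp) (by simp), one_mul]
  -- orthonormal basis transport
  have hON : Orthonormal ℝ (({0} : Set (Fin (m+1))).restrict (fun _ => L)) := by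
    constructor
    · intro i; exact hL
    · intro i j hij
      exfalso
      exact hij (Subtype.ext (i.2.trans j.2.symm))
  obtain ⟨b, hb⟩ := hON.exists_orthonormalBasis_extension_of_card_eq
    (by simp [finrank_euclideanSpace_fin])
  have hb0 : b 0 = L := hb 0 rfl
  have hinner0 : ∀ x : EuclideanSpace ℝ (Fin (m+1)), (inner ℝ L x : ℝ) = b.repr x 0 := by
    intro x
    rw [← hb0, ← b.repr.inner_map_map (b 0) x, b.repr_self]
    simp [EuclideanSpace.inner_single_left]
  set D : Set (EuclideanSpace ℝ (Fin (m+1))) :=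
    {z | ‖z‖ < 1 ∧ Real.sqrt t * ‖z‖ < |z 0|} with hDdef
  have hCD : volume C = volume D := by
    have hpre : b.repr.symm ⁻¹' C = D := by
      ext z
      simp only [mem_preimage, hCdef, hDdef, mem_setOf_eq, LinearIsometryEquiv.norm_map]
      rw [hinner0, LinearIsometryEquiv.apply_symm_apply]
    have := (b.measurePreserving_repr_symm).measure_preimage hCmeas.nullMeasurableSet
    rw [hpre] at this
    exact this.symm
  -- to Pi space
  set D2 : Set (Fin (m+1) → ℝ) := {f | ∑ j, f j^2 < 1 ∧ t * ∑ j, f j^2 < f 0^2} with hD2def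
  have hQmeas : Measurable (fun f : Fin (m+1) → ℝ => ∑ j, f j^2) :=
    Finset.measurable_sum _ (fun j _ => ((measurable_pi_apply j).pow_const 2))
  have hD2meas : MeasurableSet D2 := by
    apply MeasurableSet.inter
    · exact measurableSet_lt hQmeas measurable_const
    · exact measurableSet_lt (hQmeas.const_mul t) ((measurable_pi_apply 0).pow_const 2)
  have hDD2 : volume D = volume D2 := by
    have hpre : ((MeasurableEquiv.toLp 2 (Fin (m+1) → ℝ)).symm) ⁻¹' D2 = D := by
      ext z
      have hz : ∀ j, ((MeasurableEquiv.toLp 2 (Fin (m+1) → ℝ)).symm) z j = z j := fun j => rfl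
      simp only [mem_preimage, hD2def, hDdef, mem_setOf_eq]
      simp_rw [hz]
      have hnorm : ‖z‖ = Real.sqrt (∑ j, z j ^ 2) := by
        rw [EuclideanSpace.norm_eq]
        congr 1
        exact Finset.sum_congr rfl fun j _ => by rw [Real.norm_eq_abs, sq_abs]
      have hQ : (0:ℝ) ≤ ∑ j, z j ^ 2 := by positivity
      have heq : Real.sqrt t * ‖z‖ = Real.sqrt (t * ∑ j, z j ^ 2) := by
        rw [hnorm, Real.sqrt_mul ht0.le]
      constructor
      · rintro ⟨h1, h2⟩
        constructor
        · rw [hnorm, Real.sqrt_lt' one_pos, one_pow]; exact h1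
        · rw [heq, ← Real.sqrt_sq_eq_abs]
          exact Real.sqrt_lt_sqrt (by positivity) h2
      · rintro ⟨h1, h2⟩
        constructor
        · rwa [hnorm, Real.sqrt_lt' one_pos, one_pow] at h1
        · rw [heq, ← Real.sqrt_sq_eq_abs] at h2
          exact (Real.sqrt_lt_sqrt_iff (by positivity)).mp h2
    have := (EuclideanSpace.volume_preserving_symm_measurableEquiv_toLp (Fin (m+1))).measure_preimage
      hD2meas.nullMeasurableSet
    rw [hpre] at this
    exact this
  -- split off coordinate 0
  set S : Set (ℝ × (Fin m → ℝ)) :=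
    {p | p.1^2 + ∑ j, p.2 j^2 < 1 ∧ t * (p.1^2 + ∑ j, p.2 j^2) < p.1^2} with hSdef
  have hQ2meas : Measurable (fun p : ℝ × (Fin m → ℝ) => p.1^2 + ∑ j, p.2 j^2) :=
    (measurable_fst.pow_const 2).add
      (Finset.measurable_sum _ (fun j _ => ((measurable_pi_apply j).comp measurable_snd).pow_const 2))
  have hSmeas : MeasurableSet S := by
    apply MeasurableSet.inter
    · exact measurableSet_lt hQ2meas measurable_const
    · exact measurableSet_lt (hQ2meas.const_mul t) (measurable_fst.pow_const 2)
  have hD2S : volume D2 = (volume : Measure ℝ).prod (volume : Measure (Fin m → ℝ)) S := by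
    have hpre : (MeasurableEquiv.piFinSuccAbove (fun _ : Fin (m+1) => ℝ) 0) ⁻¹' S = D2 := by
      ext f
      simp only [mem_preimage, MeasurableEquiv.piFinSuccAbove_apply, hSdef, hD2def, mem_setOf_eq]
      rw [Fin.sum_univ_succAbove (fun j => f j ^ 2) 0]
      exact Iff.rfl
    have := (volume_preserving_piFinSuccAbove (fun _ : Fin (m+1) => ℝ) 0).measure_preimage
      hSmeas.nullMeasurableSet
    rw [hpre] at this
    exact this
  -- section bound
  set B := volume (Metric.ball (0 : EuclideanSpace ℝ (Fin m)) 1) with hBdef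
  have hsec : ∀ s : ℝ, volume (Prod.mk s ⁻¹' S)
      ≤ (Ioo (-1:ℝ) 1).indicator (fun s' => ENNReal.ofReal (hFun t m s') * B) s := by
    intro s
    by_cases hs : s ∈ Ioo (-1:ℝ) 1
    · rw [indicator_of_mem hs]
      have hs2 : s^2 < 1 := by
        rcases hs with ⟨hl, hr⟩; nlinarith
      by_cases hb : s^2 ≤ t
      · have hsub : Prod.mk s ⁻¹' S
            ⊆ {y : Fin m → ℝ | ∑ j, y j^2 < (Real.sqrt ((1-t)/t) * |s|)^2} := by
          intro y hy
          simp only [mem_preimage, hSdef, mem_setOf_eq] at hy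
          obtain ⟨h1, h2⟩ := hy
          have hQ : (0:ℝ) ≤ ∑ j, y j^2 := by positivity
          have hcs : (Real.sqrt ((1-t)/t) * |s|)^2 = (1-t)/t * s^2 := by
            rw [mul_pow, sq_abs, Real.sq_sqrt (div_nonneg (by linarith) ht0.le)]
          rw [mem_setOf_eq, hcs, show (1-t)/t * s^2 = ((1-t) * s^2)/t by ring,
            lt_div_iff₀ ht0]
          nlinarith
        calc volume (Prod.mk s ⁻¹' S) ≤ _ := measure_mono hsub
          _ = ENNReal.ofReal ((Real.sqrt ((1-t)/t) * |s|)^m) * B :=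
              pi_sum_sq_lt_volume m hm (by positivity)
          _ = ENNReal.ofReal (hFun t m s) * B := by
              rw [show hFun t m s = (Real.sqrt ((1-t)/t) * |s|)^m by rw [hFun, if_pos hb]]
      · have h1t : (0:ℝ) ≤ 1 - s^2 := by linarith
        have hsub : Prod.mk s ⁻¹' S
            ⊆ {y : Fin m → ℝ | ∑ j, y j^2 < (Real.sqrt (1-s^2))^2} := by
          intro y hy
          simp only [mem_preimage, hSdef, mem_setOf_eq] at hy
          rw [mem_setOf_eq, Real.sq_sqrt h1t]
          have : (0:ℝ) ≤ s^2 := by positivity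
          linarith [hy.1]
        calc volume (Prod.mk s ⁻¹' S) ≤ _ := measure_mono hsub
          _ = ENNReal.ofReal ((Real.sqrt (1-s^2))^m) * B :=
              pi_sum_sq_lt_volume m hm (Real.sqrt_nonneg _)
          _ = ENNReal.ofReal (hFun t m s) * B := by
              rw [sqrt_pow_eq_rpow h1t,
                show hFun t m s = (1-s^2) ^ ((m:ℝ)/2) by rw [hFun, if_neg hb]]
    · rw [indicator_of_notMem hs]
      have hempty : Prod.mk s ⁻¹' S = ∅ := by
        ext y
        simp only [mem_preimage, hSdef, mem_setOf_eq, mem_empty_iff_false, iff_false, not_and]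
        intro h1 h2
        have hQ : (0:ℝ) ≤ ∑ j, y j^2 := by positivity
        have hs2 : s^2 < 1 := by nlinarith
        have habs : |s| < 1 := by nlinarith [sq_abs s, abs_nonneg s]
        exact hs (mem_Ioo.mpr (abs_lt.mp habs))
      rw [hempty, measure_empty]
  -- lintegral bound
  have hprodle : (volume : Measure ℝ).prod (volume : Measure (Fin m → ℝ)) S
      ≤ ENNReal.ofReal (∫ s in Ioo (-1:ℝ) 1, hFun t m s) * B := by
    rw [Measure.prod_apply hSmeas]
    calc ∫⁻ s, volume (Prod.mk s ⁻¹' S) ∂volume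
        ≤ ∫⁻ s, (Ioo (-1:ℝ) 1).indicator (fun s' => ENNReal.ofReal (hFun t m s') * B) s
          ∂volume := lintegral_mono hsec
      _ = ∫⁻ s in Ioo (-1:ℝ) 1, ENNReal.ofReal (hFun t m s) * B ∂volume := by
          rw [lintegral_indicator]
          exact measurableSet_Ioo
      _ = (∫⁻ s in Ioo (-1:ℝ) 1, ENNReal.ofReal (hFun t m s) ∂volume) * B :=
          lintegral_mul_const _ (hFun_measurable t m).ennreal_ofReal
      _ = ENNReal.ofReal (∫ s in Ioo (-1:ℝ) 1, hFun t m s) * B := by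
          rw [← ofReal_integral_eq_lintegral_ofReal
            ((hFun_integrableOn ht0 ht1 m).mono_set Ioo_subset_Icc_self)
            ((ae_restrict_mem measurableSet_Ioo).mono
              fun s hs => hFun_nonneg ht0 ht1 m (Ioo_subset_Icc_self hs))]
  -- ball volumes
  haveI : Nonempty (Fin m) := ⟨⟨0, hm⟩⟩
  have hGm : (0:ℝ) < Real.Gamma ((m:ℝ)/2+1) := Real.Gamma_pos_of_pos (by positivity)
  have hGn : (0:ℝ) < Real.Gamma (((m:ℝ)+1)/2+1) := Real.Gamma_pos_of_pos (by positivity)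
  have hVm : B = ENNReal.ofReal (Real.sqrt π ^ m / Real.Gamma ((m:ℝ)/2+1)) := by
    rw [hBdef, EuclideanSpace.volume_ball (Fin m) 0 1]
    simp [Fintype.card_fin]
  have hVn : volume (Metric.ball (0 : EuclideanSpace ℝ (Fin (m+1))) 1)
      = ENNReal.ofReal (Real.sqrt π ^ (m+1) / Real.Gamma (((m:ℝ)+1)/2+1)) := by
    rw [EuclideanSpace.volume_ball (Fin (m+1)) 0 1]
    simp [Fintype.card_fin]
  -- final assembly
  set J' := 2 * ((1-t) ^ ((m:ℝ)/2) * (Real.sqrt t/((m:ℝ)+1) + (1-t)/(((m:ℝ)+2)*Real.sqrt t)))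
    with hJ'def
  have hJ'nn : (0:ℝ) ≤ J' := by
    have hA : (0:ℝ) ≤ (1-t)^((m:ℝ)/2) := Real.rpow_nonneg (by linarith) _
    have h2 : (0:ℝ) ≤ Real.sqrt t/((m:ℝ)+1) + (1-t)/(((m:ℝ)+2)*Real.sqrt t) := by
      apply add_nonneg
      · positivity
      · apply div_nonneg (by linarith) (by positivity)
    positivity
  have hmono : volume C ≤ ENNReal.ofReal J'
      * ENNReal.ofReal (Real.sqrt π ^ m / Real.Gamma ((m:ℝ)/2+1)) := by
    rw [hCD, hDD2, hD2S, ← hVm]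
    exact hprodle.trans
      (mul_le_mul_left (ENNReal.ofReal_le_ofReal (hFun_integral_le ht0 ht1 hm)) B)
  have hVnpos : (0:ℝ) < Real.sqrt π ^ (m+1) / Real.Gamma (((m:ℝ)+1)/2+1) :=
    div_pos (pow_pos (Real.sqrt_pos.mpr Real.pi_pos) _) hGn
  have hPto : ((sphereUniform (m+1)) Aset).toReal
      = (volume C).toReal / (Real.sqrt π ^ (m+1) / Real.Gamma (((m:ℝ)+1)/2+1)) := by
    rw [hP, hVn, ENNReal.toReal_mul, ENNReal.toReal_inv, ENNReal.toReal_ofReal hVnpos.le,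
      inv_mul_eq_div]
  have hCto : (volume C).toReal ≤ J' * (Real.sqrt π ^ m / Real.Gamma ((m:ℝ)/2+1)) := by
    have hfin : ENNReal.ofReal J'
        * ENNReal.ofReal (Real.sqrt π ^ m / Real.Gamma ((m:ℝ)/2+1)) ≠ ⊤ :=
      ENNReal.mul_ne_top ENNReal.ofReal_ne_top ENNReal.ofReal_ne_top
    have := ENNReal.toReal_mono hfin hmono
    rwa [ENNReal.toReal_mul, ENNReal.toReal_ofReal hJ'nn,
      ENNReal.toReal_ofReal (div_nonneg (by positivity) hGm.le)] at this
  have hcast : ((m+1:ℕ):ℝ) - 1 = (m:ℝ) := by push_cast; ring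
  rw [hcast, hPto]
  calc (volume C).toReal / (Real.sqrt π ^ (m+1) / Real.Gamma (((m:ℝ)+1)/2+1))
      ≤ (J' * (Real.sqrt π ^ m / Real.Gamma ((m:ℝ)/2+1)))
        / (Real.sqrt π ^ (m+1) / Real.Gamma (((m:ℝ)+1)/2+1)) := by
        gcongr
    _ ≤ Real.sqrt (2/((m:ℝ)*π)) * (1-t) ^ ((m:ℝ)/2) / Real.sqrt t :=
        final_algebra m hm ht0 ht1
end

section
/- (SABER, asymptotic form) Let, for each pair (p,n) with n ≥ 2, L_1,…,L_p be arbitrary unit vectors in ℝ^n and U uniform on S^{n-1}, and let M_{p,n} = max_{1≤j≤p} |⟨L_j,U⟩|. Then for every δ > 0, sup_{n ≥ 2} P( M_{p,n} > √((1+δ)(1 - p^{-2/(n-1)})) ) → 0 as p → ∞. -/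
set_option maxHeartbeats 1000000

open MeasureTheory ProbabilityTheory Real Set Metric
open scoped ENNReal Pointwise

lemma sphereUniform_apply_eq (n : ℕ) {S : Set (EuclideanSpace ℝ (Fin n))}
    (hS : MeasurableSet S) :
    sphereUniform n S =
      ((n : ℝ≥0∞) * volume (ball (0 : EuclideanSpace ℝ (Fin n)) 1))⁻¹ *
        ((n : ℝ≥0∞) * volume (Set.Ioo (0:ℝ) 1 •
          (Subtype.val '' (Subtype.val ⁻¹' S :
            Set (sphere (0 : EuclideanSpace ℝ (Fin n)) 1))))) := by
  rw [sphereUniform, Measure.smul_apply, Measure.map_apply measurable_subtype_coe hS,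
    Measure.toSphere_apply' _ (measurable_subtype_coe hS), Measure.toSphere_apply_univ,
    finrank_euclideanSpace_fin, smul_eq_mul]

lemma sphereUniform_cap_le (n : ℕ) (hn : n ≠ 0) (v : EuclideanSpace ℝ (Fin n)) (τ ρ : ℝ)
    (hρ : 0 ≤ ρ) (K : ℕ) (c : ℕ → EuclideanSpace ℝ (Fin n))
    (hcover : ∀ r : ℝ, r ∈ Set.Ioo (0:ℝ) 1 → ∀ u : EuclideanSpace ℝ (Fin n), ‖u‖ = 1 →
      τ < (inner ℝ v u : ℝ) → ∃ i, i < K ∧ r • u ∈ closedBall (c i) ρ) :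
    sphereUniform n {u | τ < (inner ℝ v u : ℝ)} ≤ (K : ℝ≥0∞) * ENNReal.ofReal (ρ ^ n) := by
  have hcont : Continuous fun u : EuclideanSpace ℝ (Fin n) => (inner ℝ v u : ℝ) :=
    Continuous.inner continuous_const continuous_id
  have hS : MeasurableSet {u : EuclideanSpace ℝ (Fin n) | τ < (inner ℝ v u : ℝ)} :=
    (isOpen_lt continuous_const hcont).measurableSet
  rw [sphereUniform_apply_eq n hS]
  set S := {u : EuclideanSpace ℝ (Fin n) | τ < (inner ℝ v u : ℝ)}
  have hvB0 : volume (ball (0 : EuclideanSpace ℝ (Fin n)) 1) ≠ 0 :=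
    (measure_ball_pos volume 0 one_pos).ne'
  have hvBt : volume (ball (0 : EuclideanSpace ℝ (Fin n)) 1) ≠ ∞ := measure_ball_lt_top.ne
  have hsub : Set.Ioo (0:ℝ) 1 •
      (Subtype.val '' (Subtype.val ⁻¹' S :
        Set (sphere (0 : EuclideanSpace ℝ (Fin n)) 1))) ⊆
      ⋃ i ∈ Finset.range K, closedBall (c i) ρ := by
    intro x hx
    rcases Set.mem_smul.1 hx with ⟨r, hr, y, hy, rfl⟩
    rw [Set.image_preimage_eq_inter_range, Subtype.range_coe] at hy
    have hy1 : ‖y‖ = 1 := by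
      have := hy.2
      rwa [mem_sphere_zero_iff_norm] at this
    rcases hcover r hr y hy1 hy.1 with ⟨i, hiK, hmem⟩
    exact Set.mem_biUnion (Finset.mem_range.2 hiK) hmem
  have hvol : volume (Set.Ioo (0:ℝ) 1 •
      (Subtype.val '' (Subtype.val ⁻¹' S :
        Set (sphere (0 : EuclideanSpace ℝ (Fin n)) 1)))) ≤
      (K : ℝ≥0∞) * (ENNReal.ofReal (ρ ^ n) * volume (ball (0 : EuclideanSpace ℝ (Fin n)) 1)) := by
    refine (measure_mono hsub).trans ?_
    refine (measure_biUnion_finset_le _ _).trans ?_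
    have : ∀ i ∈ Finset.range K,
        volume (closedBall (c i) ρ) =
          ENNReal.ofReal (ρ ^ n) * volume (ball (0 : EuclideanSpace ℝ (Fin n)) 1) := by
      intro i _
      rw [Measure.addHaar_closedBall _ _ hρ, finrank_euclideanSpace_fin]
    rw [Finset.sum_congr rfl this, Finset.sum_const, Finset.card_range, nsmul_eq_mul]
  calc ((n : ℝ≥0∞) * volume (ball (0 : EuclideanSpace ℝ (Fin n)) 1))⁻¹ *
        ((n : ℝ≥0∞) * volume (Set.Ioo (0:ℝ) 1 •
          (Subtype.val '' (Subtype.val ⁻¹' S :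
            Set (sphere (0 : EuclideanSpace ℝ (Fin n)) 1)))))
      ≤ ((n : ℝ≥0∞) * volume (ball (0 : EuclideanSpace ℝ (Fin n)) 1))⁻¹ *
        ((n : ℝ≥0∞) * ((K : ℝ≥0∞) * (ENNReal.ofReal (ρ ^ n) *
          volume (ball (0 : EuclideanSpace ℝ (Fin n)) 1)))) :=
        mul_le_mul_right (mul_le_mul_right hvol _) _
    _ = (K : ℝ≥0∞) * ENNReal.ofReal (ρ ^ n) := by
        rw [show (n : ℝ≥0∞) * ((K : ℝ≥0∞) * (ENNReal.ofReal (ρ ^ n) *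
            volume (ball (0 : EuclideanSpace ℝ (Fin n)) 1))) =
            ((n : ℝ≥0∞) * volume (ball (0 : EuclideanSpace ℝ (Fin n)) 1)) *
              ((K : ℝ≥0∞) * ENNReal.ofReal (ρ ^ n)) by ring]
        rw [← mul_assoc, ENNReal.inv_mul_cancel
          (mul_ne_zero (Nat.cast_ne_zero.2 hn) hvB0)
          (ENNReal.mul_ne_top (ENNReal.natCast_ne_top _) hvBt), one_mul]

lemma norm_expand {n : ℕ} (v u : EuclideanSpace ℝ (Fin n)) (hv : ‖v‖ = 1) (hu : ‖u‖ = 1)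
    (r a : ℝ) (hr : 0 ≤ r) (ha : 0 ≤ a) :
    ‖r • u - a • v‖ ^ 2 = r ^ 2 - 2 * (a * (r * (inner ℝ v u : ℝ))) + a ^ 2 := by
  rw [norm_sub_sq_real, norm_smul, norm_smul, hu, hv, real_inner_smul_left,
    real_inner_smul_right, Real.norm_eq_abs, Real.norm_eq_abs, abs_of_nonneg hr,
    abs_of_nonneg ha, real_inner_comm u v]
  ring

lemma geom_single {n : ℕ} (v u : EuclideanSpace ℝ (Fin n)) (hv : ‖v‖ = 1) (hu : ‖u‖ = 1)
    (τ : ℝ) (hτ0 : 0 ≤ τ) (hτ : τ ^ 2 ≤ 1/2) (r : ℝ) (hr : r ∈ Set.Ioo (0:ℝ) 1)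
    (hlt : τ < (inner ℝ v u : ℝ)) :
    r • u ∈ closedBall (τ • v) (Real.sqrt (1 - τ ^ 2)) := by
  have h2 : (1:ℝ) - τ ^ 2 ≥ 0 := by nlinarith
  rw [mem_closedBall, dist_eq_norm]
  rw [← Real.sqrt_sq (norm_nonneg (r • u - τ • v))]
  refine Real.sqrt_le_sqrt ?_
  rw [norm_expand v u hv hu r τ hr.1.le hτ0]
  have hip : τ ≤ (inner ℝ v u : ℝ) := hlt.le
  nlinarith [mul_le_mul_of_nonneg_left hip (mul_nonneg hτ0 hr.1.le),
    mul_nonneg (sub_nonneg.2 hr.2.le) (by linarith : (0:ℝ) ≤ 1 - 2*τ^2), hr.1.le, hr.2.le]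

lemma geom_multi {n : ℕ} (v u : EuclideanSpace ℝ (Fin n)) (hv : ‖v‖ = 1) (hu : ‖u‖ = 1)
    (τ ε₀ : ℝ) (hτ0 : 0 ≤ τ) (hτ1 : τ ^ 2 ≤ 1)
    (hε : 0 < ε₀) (r : ℝ) (hr : r ∈ Set.Ioo (0:ℝ) 1)
    (hlt : τ < (inner ℝ v u : ℝ)) (hw0 : 0 < Real.sqrt (1 - τ ^ 2)) :
    ∃ i, i < ⌊1/(ε₀ * Real.sqrt (1 - τ ^ 2))⌋₊ + 1 ∧
      r • u ∈ closedBall ((((i : ℝ) * ε₀ * Real.sqrt (1 - τ ^ 2)) • v))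
        ((1 + ε₀) * Real.sqrt (1 - τ ^ 2)) := by
  set w := Real.sqrt (1 - τ ^ 2) with hw
  have hw2 : w ^ 2 = 1 - τ ^ 2 := Real.sq_sqrt (by linarith)
  set s := r * (inner ℝ v u : ℝ) with hs
  have hip1 : (inner ℝ v u : ℝ) ≤ 1 := by
    have := real_inner_le_norm v u
    rwa [hv, hu, one_mul] at this
  have hs0 : 0 ≤ s := mul_nonneg hr.1.le (hτ0.trans hlt.le)
  have hs1 : s ≤ 1 := by
    calc s ≤ r * 1 := mul_le_mul_of_nonneg_left hip1 hr.1.le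
    _ ≤ 1 := by linarith [hr.2]
  have hεw : 0 < ε₀ * w := mul_pos hε hw0
  refine ⟨⌊s/(ε₀ * w)⌋₊, ?_, ?_⟩
  · have : ⌊s/(ε₀ * w)⌋₊ ≤ ⌊1/(ε₀ * w)⌋₊ :=
      Nat.floor_le_floor (by gcongr)
    omega
  · set i := ⌊s/(ε₀ * w)⌋₊
    set a := (i : ℝ) * ε₀ * w with hadef
    have ha1 : a ≤ s := by
      have := Nat.floor_le (div_nonneg hs0 hεw.le)
      calc a = (i:ℝ) * (ε₀ * w) := by ring
      _ ≤ (s/(ε₀*w)) * (ε₀*w) := by gcongr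
      _ = s := by field_simp
    have ha2 : s ≤ a + ε₀ * w := by
      have h := Nat.lt_floor_add_one (s/(ε₀*w))
      have : s < ((i:ℝ) + 1) * (ε₀ * w) := by
        calc s = (s/(ε₀*w)) * (ε₀*w) := by field_simp
        _ < ((i:ℝ) + 1) * (ε₀ * w) := by gcongr
      nlinarith
    have ha0 : 0 ≤ a := by positivity
    rw [mem_closedBall, dist_eq_norm]
    rw [← Real.sqrt_sq (norm_nonneg (r • u - a • v))]
    have hrhs : (0:ℝ) ≤ (1 + ε₀) * w := by positivity
    rw [← Real.sqrt_sq hrhs]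
    refine Real.sqrt_le_sqrt ?_
    rw [norm_expand v u hv hu r a hr.1.le ha0]
    have hsτ : r * τ ≤ s := mul_le_mul_of_nonneg_left hlt.le hr.1.le
    have hs2 : r ^ 2 * τ ^ 2 ≤ s ^ 2 := by nlinarith [mul_nonneg hr.1.le hτ0]
    have hint1 : (s - a) * (s - a) ≤ (ε₀ * w) * (ε₀ * w) :=
      mul_le_mul (by linarith) (by linarith) (by linarith) hεw.le
    have hr2 : r ^ 2 ≤ 1 := by nlinarith [hr.1.le, hr.2.le]
    have h9 : r ^ 2 - s ^ 2 ≤ w ^ 2 := by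
      nlinarith [mul_le_mul_of_nonneg_right hr2 (by linarith : (0:ℝ) ≤ 1 - τ ^ 2)]
    nlinarith [hint1, h9, mul_nonneg (mul_nonneg hε.le hw0.le) hw0.le]

lemma keyI {δ m q T pr : ℝ} (hδ : 0 < δ) (hm : 1 ≤ m) (hpr : 1 ≤ pr)
    (hq : q = pr ^ (-2/m)) (hT : T = (1+δ)*(1-q)) (hT1 : T ≤ 1) :
    pr * (1 - T) ^ (m/2) ≤ Real.exp (-(δ * Real.log pr)) := by
  have hpr0 : 0 < pr := by linarith
  have hm0 : 0 < m := by linarith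
  have hq0 : 0 < q := hq ▸ Real.rpow_pos_of_pos hpr0 _
  have hlogq : Real.log q = (-2/m) * Real.log pr := by rw [hq, Real.log_rpow hpr0]
  set x := δ * (1-q) / q with hx
  have step1 : 1 - T ≤ q * Real.exp (-x) := by
    have h1 : -x + 1 ≤ Real.exp (-x) := Real.add_one_le_exp (-x)
    have h2 : q * (-x + 1) = 1 - T := by
      rw [hT, hx]; field_simp; ring
    calc 1 - T = q * (-x + 1) := h2.symm
      _ ≤ q * Real.exp (-x) := by gcongr
  have step2 : (1 - T) ^ (m/2) ≤ (q * Real.exp (-x)) ^ (m/2) :=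
    Real.rpow_le_rpow (by linarith) step1 (by positivity)
  have step3 : (q * Real.exp (-x)) ^ (m/2) = q ^ (m/2) * Real.exp (-(x * (m/2))) := by
    rw [Real.mul_rpow hq0.le (Real.exp_pos _).le,
      Real.rpow_def_of_pos (Real.exp_pos _), Real.log_exp]
    ring_nf
  have step4 : q ^ (m/2) = pr⁻¹ := by
    rw [hq, ← Real.rpow_mul hpr0.le]
    rw [show (-2/m) * (m/2) = -1 by field_simp]
    exact Real.rpow_neg_one pr
  have hlogpr : 0 ≤ Real.log pr := Real.log_nonneg hpr
  have step5 : δ * Real.log pr ≤ x * (m/2) := by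
    have h3 : Real.log (1/q) ≤ 1/q - 1 := Real.log_le_sub_one_of_pos (by positivity)
    have h4 : Real.log (1/q) = (2/m) * Real.log pr := by
      rw [one_div, Real.log_inv, hlogq]; ring
    have h5 : (2/m) * Real.log pr ≤ (1-q)/q := by
      rw [← h4]
      calc Real.log (1/q) ≤ 1/q - 1 := h3
        _ = (1-q)/q := by field_simp
    have h6 : δ * (m/2) * ((2/m) * Real.log pr) ≤ δ * (m/2) * ((1-q)/q) :=
      mul_le_mul_of_nonneg_left h5 (by positivity)
    calc δ * Real.log pr = δ * (m/2) * ((2/m) * Real.log pr) := by field_simp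
      _ ≤ δ * (m/2) * ((1-q)/q) := h6
      _ = x * (m/2) := by rw [hx]; ring
  calc pr * (1 - T) ^ (m/2) ≤ pr * (q ^ (m/2) * Real.exp (-(x * (m/2)))) := by
        rw [← step3]; exact mul_le_mul_of_nonneg_left step2 hpr0.le
    _ = Real.exp (-(x * (m/2))) := by rw [step4]; field_simp
    _ ≤ Real.exp (-(δ * Real.log pr)) := by
        apply Real.exp_le_exp.2; linarith

lemma mBound {δ m q T pr : ℝ} (hδ : 0 < δ) (hm : 1 ≤ m) (hpr : 2 ≤ pr)
    (hq : q = pr ^ (-2/m)) (hT : T = (1+δ)*(1-q)) (hhalf : 1/2 < T) :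
    m * Real.log ((2+2*δ)/(1+2*δ)) ≤ 2 * Real.log pr := by
  have hpr0 : 0 < pr := by linarith
  have hm0 : 0 < m := by linarith
  have hq0 : 0 < q := hq ▸ Real.rpow_pos_of_pos hpr0 _
  have hqlt : q < (1+2*δ)/(2+2*δ) := by
    rw [lt_div_iff₀ (by linarith : (0:ℝ) < 2+2*δ)]
    rw [hT] at hhalf
    nlinarith [hhalf]
  have hlog : Real.log q < Real.log ((1+2*δ)/(2+2*δ)) := Real.log_lt_log hq0 hqlt
  have h2 : Real.log ((1+2*δ)/(2+2*δ)) = - Real.log ((2+2*δ)/(1+2*δ)) := by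
    rw [← Real.log_inv, inv_div]
  have hlogq : Real.log q = (-2/m) * Real.log pr := by rw [hq, Real.log_rpow hpr0]
  rw [hlogq, h2] at hlog
  have := mul_lt_mul_of_pos_left hlog hm0
  have hc : m * ((-2/m) * Real.log pr) = -(2 * Real.log pr) := by field_simp
  nlinarith

theorem saber_asymptotic (δ : ℝ) (hδ : 0 < δ) :
    ∀ ε > 0, ∃ P : ℕ, ∀ p : ℕ, P ≤ p → ∀ n : ℕ, 2 ≤ n →
      ∀ L : Fin p → EuclideanSpace ℝ (Fin n), (∀ j, ‖L j‖ = 1) →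
        ((sphereUniform n)
            {u | Real.sqrt ((1 + δ) * (1 - (p:ℝ) ^ (-2/((n:ℝ)-1)))) <
                  ⨆ j, |(inner ℝ (L j) u : ℝ)|}).toReal < ε := by
  intro ε hε
  have hlb0 : 0 < Real.log ((2+2*δ)/(1+2*δ)) := by
    apply Real.log_pos
    rw [lt_div_iff₀ (by linarith)]
    linarith
  set lb := Real.log ((2+2*δ)/(1+2*δ)) with hlbdef
  set ε₀ : ℝ := min 1 (δ * lb / 4) with hε₀def
  have hε₀0 : 0 < ε₀ := lt_min one_pos (by positivity)
  have hε₀1 : ε₀ ≤ 1 := min_le_left _ _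
  have hε₀lb : ε₀ ≤ δ * lb / 4 := min_le_right _ _
  set C : ℝ := 18 / ε₀ with hCdef
  have hC0 : 0 < C := by positivity
  have hC2 : 2 ≤ C := by
    rw [hCdef, le_div_iff₀ hε₀0]; nlinarith
  have hC12 : 12 / ε₀ ≤ C := by
    rw [hCdef]; gcongr <;> norm_num
  set R : ℝ := C / ε with hRdef
  have hR0 : 0 < R := by positivity
  refine ⟨max 2 (⌈R ^ ((2:ℝ)/δ)⌉₊ + 2), fun p hp n hn L hL => ?_⟩
  have hp2 : 2 ≤ p := le_trans (le_max_left _ _) hp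
  have hpr2 : (2:ℝ) ≤ (p:ℝ) := by exact_mod_cast hp2
  have hpr0 : (0:ℝ) < p := by linarith
  have hpr1 : (1:ℝ) ≤ p := by linarith
  have hn0 : n ≠ 0 := by omega
  -- final numeric bound
  have hfinal : C * (p:ℝ) ^ (-(δ/2)) < ε := by
    have hple : (⌈R ^ ((2:ℝ)/δ)⌉₊ + 2 : ℕ) ≤ p := le_trans (le_max_right _ _) hp
    have h1 : R ^ ((2:ℝ)/δ) < (p:ℝ) := by
      have h2 : R ^ ((2:ℝ)/δ) ≤ (⌈R ^ ((2:ℝ)/δ)⌉₊ : ℝ) := Nat.le_ceil _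
      have h3 : ((⌈R ^ ((2:ℝ)/δ)⌉₊ + 2 : ℕ) : ℝ) ≤ (p:ℝ) := by exact_mod_cast hple
      push_cast at h3; linarith
    have h4 : R < (p:ℝ) ^ (δ/2) := by
      have h5 := Real.rpow_lt_rpow (Real.rpow_nonneg hR0.le _) h1
        (by positivity : (0:ℝ) < δ/2)
      rwa [← Real.rpow_mul hR0.le, show ((2:ℝ)/δ)*(δ/2) = 1 by field_simp,
        Real.rpow_one] at h5
    have hpow0 : (0:ℝ) < (p:ℝ) ^ ((δ:ℝ)/2) := Real.rpow_pos_of_pos hpr0 _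
    have hrw : C * (p:ℝ) ^ (-(δ/2)) = C / (p:ℝ) ^ (δ/2) := by
      rw [Real.rpow_neg hpr0.le]; ring
    rw [hrw, div_lt_iff₀ hpow0]
    calc C = R * ε := by rw [hRdef]; field_simp
      _ < (p:ℝ) ^ (δ/2) * ε := mul_lt_mul_of_pos_right h4 hε
      _ = ε * (p:ℝ) ^ (δ/2) := mul_comm _ _
  set m : ℝ := (n:ℝ) - 1 with hmdef
  have hm1 : 1 ≤ m := by
    have h2n : (2:ℝ) ≤ (n:ℝ) := by exact_mod_cast hn
    rw [hmdef]; linarith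
  have hm0 : 0 < m := by linarith
  set q : ℝ := (p:ℝ) ^ (-2/m) with hqdef
  have hq0 : 0 < q := Real.rpow_pos_of_pos hpr0 _
  have hq1 : q < 1 := Real.rpow_lt_one_of_one_lt_of_neg (by linarith)
    (div_neg_of_neg_of_pos (by norm_num) hm0)
  set T : ℝ := (1+δ) * (1-q) with hTdef
  have hT0 : 0 ≤ T := mul_nonneg (by linarith) (by linarith)
  set τ : ℝ := Real.sqrt T with hτdef
  have hτ0 : 0 ≤ τ := Real.sqrt_nonneg _
  have hτsq : τ ^ 2 = T := Real.sq_sqrt hT0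
  have hppow : (p:ℝ) ^ (-(δ/2)) = Real.exp (-((δ/2) * Real.log p)) := by
    rw [Real.rpow_def_of_pos hpr0]
    congr 1; ring
  -- cap bound by cases
  obtain ⟨K, ρ, hρ0, hcapbd, hreal⟩ :
      ∃ (K : ℕ) (ρ : ℝ), 0 ≤ ρ ∧
        (∀ v : EuclideanSpace ℝ (Fin n), ‖v‖ = 1 →
          sphereUniform n {u | τ < (inner ℝ v u : ℝ)} ≤
            (K : ℝ≥0∞) * ENNReal.ofReal (ρ ^ n)) ∧
        (p:ℝ) * (2 * ((K:ℝ) * ρ ^ n)) ≤ C * (p:ℝ) ^ (-(δ/2)) := by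
    rcases le_or_gt 1 T with hA | hTlt1
    · -- event-empty case
      refine ⟨0, 0, le_rfl, ?_, ?_⟩
      · intro v hv
        refine sphereUniform_cap_le n hn0 v τ 0 le_rfl 0 (fun _ => 0) ?_
        intro r hr u hu hlt
        exfalso
        have h1 : (inner ℝ v u : ℝ) ≤ 1 := by
          have := real_inner_le_norm v u; rwa [hv, hu, one_mul] at this
        have h2 : (1:ℝ) ≤ τ := Real.one_le_sqrt.2 hA
        linarith
      · simp only [Nat.cast_zero, zero_mul, mul_zero]
        positivity
    · have h1T : 0 ≤ 1 - T := by linarith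
      have hτ1 : τ ^ 2 ≤ 1 := by rw [hτsq]; linarith
      set w : ℝ := Real.sqrt (1 - T) with hwdef
      have hw0' : 0 ≤ w := Real.sqrt_nonneg _
      have hw1 : w ≤ 1 := Real.sqrt_le_one.2 (by linarith)
      have hwt : Real.sqrt (1 - τ ^ 2) = w := by rw [hτsq]
      have hwpow : w ^ (n-1) = (1 - T) ^ (m/2) := by
        rw [hwdef, Real.sqrt_eq_rpow, ← Real.rpow_natCast ((1-T) ^ ((1:ℝ)/2)) (n-1),
          ← Real.rpow_mul h1T]
        congr 1
        have hcast : ((n - 1 : ℕ) : ℝ) = m := by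
          rw [hmdef, Nat.cast_sub (by omega : 1 ≤ n), Nat.cast_one]
        rw [hcast]; ring
      have hkey : (p:ℝ) * (1 - T) ^ (m/2) ≤ Real.exp (-(δ * Real.log p)) :=
        keyI hδ hm1 hpr1 hqdef hTdef (by linarith)
      have hexp_half : Real.exp (-(δ * Real.log p)) ≤ Real.exp (-((δ/2) * Real.log p)) := by
        apply Real.exp_le_exp.2
        have := Real.log_nonneg hpr1
        nlinarith
      rcases le_or_gt T (1/2) with hCs | hB
      · -- small τ: one ball
        refine ⟨1, w, hw0', ?_, ?_⟩
        · intro v hv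
          refine sphereUniform_cap_le n hn0 v τ w hw0' 1 (fun _ => τ • v) ?_
          intro r hr u hu hlt
          exact ⟨0, one_pos, by
            rw [← hwt]
            exact geom_single v u hv hu τ hτ0 (by rw [hτsq]; linarith) r hr hlt⟩
        · have h1 : w ^ n ≤ w ^ (n-1) := pow_le_pow_of_le_one hw0' hw1 (Nat.sub_le n 1)
          calc (p:ℝ) * (2 * (((1:ℕ):ℝ) * w ^ n)) = 2 * ((p:ℝ) * w ^ n) := by
                push_cast; ring
            _ ≤ 2 * ((p:ℝ) * w ^ (n-1)) := by
                refine mul_le_mul_of_nonneg_left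
                  (mul_le_mul_of_nonneg_left h1 hpr0.le) (by norm_num)
            _ = 2 * ((p:ℝ) * (1-T) ^ (m/2)) := by rw [hwpow]
            _ ≤ 2 * Real.exp (-(δ * Real.log p)) :=
                mul_le_mul_of_nonneg_left hkey (by norm_num)
            _ ≤ C * Real.exp (-((δ/2) * Real.log p)) :=
                mul_le_mul hC2 hexp_half (Real.exp_pos _).le hC0.le
            _ = C * (p:ℝ) ^ (-(δ/2)) := by rw [hppow]
      · -- large τ: many balls
        have hw0 : 0 < w := Real.sqrt_pos.2 (by linarith)
        set K := ⌊1/(ε₀ * w)⌋₊ + 1 with hKdef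
        refine ⟨K, (1+ε₀)*w, by positivity, ?_, ?_⟩
        · intro v hv
          refine sphereUniform_cap_le n hn0 v τ ((1+ε₀)*w) (by positivity) K
            (fun i => (((i:ℝ) * ε₀ * w) • v)) ?_
          intro r hr u hu hlt
          have h := geom_multi v u hv hu τ ε₀ hτ0 hτ1 hε₀0 r hr hlt
            (by rw [hwt]; exact hw0)
          rw [hwt] at h
          exact h
        · have hmlog : m * lb ≤ 2 * Real.log p := mBound hδ hm1 hpr2 hqdef hTdef hB
          have hlogp0 : 0 ≤ Real.log p := Real.log_nonneg hpr1
          have hεm : ε₀ * m ≤ (δ/2) * Real.log p := by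
            calc ε₀ * m ≤ (δ * lb / 4) * m :=
                  mul_le_mul_of_nonneg_right hε₀lb (by linarith)
              _ = (δ/4) * (m * lb) := by ring
              _ ≤ (δ/4) * (2 * Real.log p) :=
                  mul_le_mul_of_nonneg_left hmlog (by linarith)
              _ = (δ/2) * Real.log p := by ring
          have hεw1 : ε₀ * w ≤ 1 := by
            calc ε₀ * w ≤ 1 * 1 := mul_le_mul hε₀1 hw1 hw0.le one_pos.le
              _ = 1 := by norm_num
          have hKle : (K:ℝ) ≤ 2/(ε₀ * w) := by
            have h1 : (⌊1/(ε₀*w)⌋₊ : ℝ) ≤ 1/(ε₀*w) :=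
              Nat.floor_le (by positivity)
            have h3 : (1:ℝ) ≤ 1/(ε₀*w) := by
              rw [le_div_iff₀ (by positivity)]; linarith
            rw [hKdef]
            push_cast
            calc (⌊1/(ε₀*w)⌋₊ : ℝ) + 1 ≤ 1/(ε₀*w) + 1/(ε₀*w) := by linarith
              _ = 2/(ε₀*w) := by ring
          have hwn : w ^ n = w ^ (n-1) * w := by
            rw [← pow_succ]
            congr 1
            omega
          have step1 : (K:ℝ) * w ^ n ≤ (2/ε₀) * w ^ (n-1) := by
            rw [hwn]
            calc (K:ℝ) * (w ^ (n-1) * w) ≤ (2/(ε₀*w)) * (w ^ (n-1) * w) :=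
                  mul_le_mul_of_nonneg_right hKle (by positivity)
              _ = (2/ε₀) * w ^ (n-1) := by field_simp
          have hexpn : ((1:ℝ)+ε₀) ^ n ≤ 3 * Real.exp (ε₀ * m) := by
            have h1 : ((1:ℝ)+ε₀) ^ n ≤ Real.exp ε₀ ^ n :=
              pow_le_pow_left₀ (by linarith) (by linarith [Real.add_one_le_exp ε₀]) n
            have h2 : Real.exp ε₀ ^ n = Real.exp (ε₀ * (m+1)) := by
              rw [← Real.exp_nat_mul]
              congr 1
              rw [hmdef]; push_cast; ring
            have h3 : Real.exp (ε₀*(m+1)) = Real.exp (ε₀*m) * Real.exp ε₀ := by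
              rw [← Real.exp_add]; congr 1; ring
            have h4 : Real.exp ε₀ ≤ 3 := by
              calc Real.exp ε₀ ≤ Real.exp 1 := Real.exp_le_exp.2 hε₀1
                _ ≤ 3 := by linarith [Real.exp_one_lt_d9]
            calc ((1:ℝ)+ε₀) ^ n ≤ Real.exp (ε₀*m) * Real.exp ε₀ := by
                  rw [← h3, ← h2]; exact h1
              _ ≤ Real.exp (ε₀*m) * 3 :=
                  mul_le_mul_of_nonneg_left h4 (Real.exp_pos _).le
              _ = 3 * Real.exp (ε₀*m) := by ring
          calc (p:ℝ) * (2 * ((K:ℝ) * ((1+ε₀)*w) ^ n))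
              = 2 * (((1:ℝ)+ε₀) ^ n * ((p:ℝ) * ((K:ℝ) * w ^ n))) := by
                rw [mul_pow]; ring
            _ ≤ 2 * (((1:ℝ)+ε₀) ^ n * ((p:ℝ) * ((2/ε₀) * w ^ (n-1)))) := by
                refine mul_le_mul_of_nonneg_left (mul_le_mul_of_nonneg_left
                  (mul_le_mul_of_nonneg_left step1 hpr0.le) (by positivity)) (by norm_num)
            _ = (4/ε₀) * (((1:ℝ)+ε₀) ^ n * ((p:ℝ) * (1-T) ^ (m/2))) := by
                rw [hwpow]; ring
            _ ≤ (4/ε₀) * ((3 * Real.exp (ε₀ * m)) * Real.exp (-(δ * Real.log p))) := by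
                refine mul_le_mul_of_nonneg_left ?_ (by positivity)
                refine mul_le_mul hexpn hkey ?_ (by positivity)
                positivity
            _ = (12/ε₀) * (Real.exp (ε₀ * m) * Real.exp (-(δ * Real.log p))) := by ring
            _ = (12/ε₀) * Real.exp (ε₀ * m + -(δ * Real.log p)) := by
                rw [Real.exp_add]
            _ ≤ (12/ε₀) * Real.exp (-((δ/2) * Real.log p)) := by
                refine mul_le_mul_of_nonneg_left ?_ (by positivity)
                apply Real.exp_le_exp.2
                linarith
            _ ≤ C * Real.exp (-((δ/2) * Real.log p)) :=
                mul_le_mul_of_nonneg_right hC12 (Real.exp_pos _).le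
            _ = C * (p:ℝ) ^ (-(δ/2)) := by rw [hppow]
  -- union bound
  have hNe : Nonempty (Fin p) := ⟨⟨0, by omega⟩⟩
  have hsubEv : {u : EuclideanSpace ℝ (Fin n) | τ < ⨆ j, |(inner ℝ (L j) u : ℝ)|} ⊆
      ⋃ j : Fin p, ({u : EuclideanSpace ℝ (Fin n) | τ < (inner ℝ (L j) u : ℝ)} ∪
        {u : EuclideanSpace ℝ (Fin n) | τ < (inner ℝ (-(L j)) u : ℝ)}) := by
    intro u hu
    have hu' : τ < ⨆ j, |(inner ℝ (L j) u : ℝ)| := hu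
    obtain ⟨j, hj⟩ := exists_lt_of_lt_ciSup hu'
    rcases lt_abs.1 hj with h | h
    · exact Set.mem_iUnion.2 ⟨j, Or.inl h⟩
    · refine Set.mem_iUnion.2 ⟨j, Or.inr ?_⟩
      have hni : (inner ℝ (-(L j)) u : ℝ) = -(inner ℝ (L j) u : ℝ) := inner_neg_left _ _
      show τ < (inner ℝ (-(L j)) u : ℝ)
      rw [hni]
      exact h
  have hμ : sphereUniform n
      {u : EuclideanSpace ℝ (Fin n) | τ < ⨆ j, |(inner ℝ (L j) u : ℝ)|} ≤
      (p : ℝ≥0∞) * (2 * ((K : ℝ≥0∞) * ENNReal.ofReal (ρ ^ n))) := by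
    calc sphereUniform n {u : EuclideanSpace ℝ (Fin n) | τ < ⨆ j, |(inner ℝ (L j) u : ℝ)|}
        ≤ sphereUniform n (⋃ j : Fin p,
            ({u : EuclideanSpace ℝ (Fin n) | τ < (inner ℝ (L j) u : ℝ)} ∪
             {u : EuclideanSpace ℝ (Fin n) | τ < (inner ℝ (-(L j)) u : ℝ)})) :=
          measure_mono hsubEv
      _ ≤ ∑ j : Fin p, sphereUniform n
            ({u : EuclideanSpace ℝ (Fin n) | τ < (inner ℝ (L j) u : ℝ)} ∪
             {u : EuclideanSpace ℝ (Fin n) | τ < (inner ℝ (-(L j)) u : ℝ)}) :=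
          measure_iUnion_fintype_le _ _
      _ ≤ ∑ _j : Fin p, (2 * ((K : ℝ≥0∞) * ENNReal.ofReal (ρ ^ n))) := by
          refine Finset.sum_le_sum fun j _ => ?_
          refine (measure_union_le _ _).trans ?_
          have hb1 := hcapbd (L j) (hL j)
          have hb2 := hcapbd (-(L j)) (by rw [norm_neg]; exact hL j)
          calc sphereUniform n {u : EuclideanSpace ℝ (Fin n) | τ < (inner ℝ (L j) u : ℝ)} +
              sphereUniform n {u : EuclideanSpace ℝ (Fin n) | τ < (inner ℝ (-(L j)) u : ℝ)}
              ≤ (K : ℝ≥0∞) * ENNReal.ofReal (ρ ^ n) + (K : ℝ≥0∞) * ENNReal.ofReal (ρ ^ n) :=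
                add_le_add hb1 hb2
            _ = 2 * ((K : ℝ≥0∞) * ENNReal.ofReal (ρ ^ n)) := (two_mul _).symm
      _ = (p : ℝ≥0∞) * (2 * ((K : ℝ≥0∞) * ENNReal.ofReal (ρ ^ n))) := by
          rw [Finset.sum_const, Finset.card_univ, Fintype.card_fin, nsmul_eq_mul]
  have hcast : (p : ℝ≥0∞) * (2 * ((K : ℝ≥0∞) * ENNReal.ofReal (ρ ^ n))) =
      ENNReal.ofReal ((p:ℝ) * (2 * ((K:ℝ) * ρ ^ n))) := by
    rw [ENNReal.ofReal_mul (by positivity : (0:ℝ) ≤ (p:ℝ)),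
      ENNReal.ofReal_mul (by norm_num : (0:ℝ) ≤ 2),
      ENNReal.ofReal_mul (by positivity : (0:ℝ) ≤ (K:ℝ)),
      ENNReal.ofReal_natCast, ENNReal.ofReal_natCast, ENNReal.ofReal_ofNat]
  have hle : sphereUniform n
      {u : EuclideanSpace ℝ (Fin n) | τ < ⨆ j, |(inner ℝ (L j) u : ℝ)|} ≤
      ENNReal.ofReal (C * (p:ℝ) ^ (-(δ/2))) := by
    refine hμ.trans ?_
    rw [hcast]
    exact ENNReal.ofReal_le_ofReal hreal
  have htoReal : (sphereUniform n
      {u : EuclideanSpace ℝ (Fin n) | τ < ⨆ j, |(inner ℝ (L j) u : ℝ)|}).toReal ≤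
      C * (p:ℝ) ^ (-(δ/2)) :=
    ENNReal.toReal_le_of_le_ofReal (by positivity) hle
  exact lt_of_le_of_lt htoReal hfinal
end
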